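/- arXiv:0901.1283 — 3 statements merged into one kernel-verified Lean document; each statement's English description precedes it below -/
import Mathlib

section
/- Under hypotheses (a1)–(a5), suppose that every positive solution of the difference equation x_{n+1} = f(x_n) tends to K, i.e. for every x₀ > 0 the sequence defined by iterating f starting from x₀ converges to K. Then every solution x of the initial value problem for the distributed-delay equation satisfies lim_{t→∞} x(t) = K. -/
open MeasureTheory Filter Set

/-- Max of a continuous function on a compact interval. -/
lemma aux_exists_max (f : ℝ → ℝ) (hf : Continuous f) {a b : ℝ} (hab : a ≤ b) :
    ∃ c ∈ Icc a b, ∀ y ∈ Icc a b, f y ≤ f c := by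
  obtain ⟨c, hc, hmax⟩ := isCompact_Icc.exists_isMaxOn (nonempty_Icc.mpr hab) hf.continuousOn
  exact ⟨c, hc, fun y hy => hmax hy⟩

lemma aux_exists_min (f : ℝ → ℝ) (hf : Continuous f) {a b : ℝ} (hab : a ≤ b) :
    ∃ c ∈ Icc a b, ∀ y ∈ Icc a b, f c ≤ f y := by
  obtain ⟨c, hc, hmin⟩ := isCompact_Icc.exists_isMinOn (nonempty_Icc.mpr hab) hf.continuousOn
  exact ⟨c, hc, fun y hy => hmin hy⟩

/-- K is a fixed point. -/
lemma aux_fixedK (f : ℝ → ℝ) (K : ℝ) (hK : 0 < K) (hf_cont : Continuous f)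
    (hf_below : ∀ y : ℝ, 0 < y → y < K → y < f y)
    (hf_above : ∀ y : ℝ, K < y → 0 < f y ∧ f y < y) : f K = K := by
  have h1 : K ≤ f K := by
    have hcl : IsClosed {y : ℝ | y ≤ f y} := isClosed_le continuous_id hf_cont
    have hsub : Ioo 0 K ⊆ {y : ℝ | y ≤ f y} := fun y hy => (hf_below y hy.1 hy.2).le
    have hclos : closure (Ioo 0 K) ⊆ {y : ℝ | y ≤ f y} := hcl.closure_subset_iff.mpr hsub
    have : K ∈ closure (Ioo 0 K) := by
      rw [closure_Ioo hK.ne]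
      exact ⟨hK.le, le_rfl⟩
    exact hclos this
  have h2 : f K ≤ K := by
    have hcl : IsClosed {y : ℝ | f y ≤ y} := isClosed_le hf_cont continuous_id
    have hsub : Ioi K ⊆ {y : ℝ | f y ≤ y} := fun y hy => (hf_above y hy).2.le
    have hclos : closure (Ioi K) ⊆ {y : ℝ | f y ≤ y} := hcl.closure_subset_iff.mpr hsub
    have : K ∈ closure (Ioi K) := by rw [closure_Ioi]; exact mem_Ici.mpr le_rfl
    exact hclos this
  linarith

/-- no 2-periodic points except K -/
lemma aux_per2 (f : ℝ → ℝ) (K : ℝ)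
    (hdiff : ∀ x₀ : ℝ, 0 < x₀ → Tendsto (fun n => f^[n] x₀) atTop (nhds K)) :
    ∀ p : ℝ, 0 < p → f (f p) = p → p = K := by
  intro p hp hpp
  have h2 : f^[2] p = p := by
    rw [show (2 : ℕ) = 1 + 1 from rfl, Function.iterate_add_apply]
    simpa using hpp
  have h2n : ∀ n : ℕ, f^[2 * n] p = p := by
    intro n
    induction n with
    | zero => simp
    | succ n ih =>
      rw [show 2 * (n + 1) = 2 + 2 * n by ring, Function.iterate_add_apply, ih, h2]
  have hmono : Tendsto (fun n : ℕ => 2 * n) atTop atTop :=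
    tendsto_atTop_mono (fun n : ℕ => by simp; omega) tendsto_id
  have hsub : Tendsto (fun n : ℕ => f^[2 * n] p) atTop (nhds K) := (hdiff p hp).comp hmono
  have hconst : Tendsto (fun _ : ℕ => p) atTop (nhds K) := by
    convert hsub using 1
    exact funext fun n => (h2n n).symm
  exact (tendsto_nhds_unique hconst tendsto_const_nhds).symm


section C3
variable (f : ℝ → ℝ) (K : ℝ) (hK : 0 < K) (hf_cont : Continuous f) (hf_zero : f 0 = 0)
  (hf_nonneg : ∀ y : ℝ, 0 ≤ y → 0 ≤ f y)
  (hf_below : ∀ y : ℝ, 0 < y → y < K → y < f y)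
  (hf_above : ∀ y : ℝ, K < y → 0 < f y ∧ f y < y)
  (hdiff : ∀ x₀ : ℝ, 0 < x₀ → Tendsto (fun n => f^[n] x₀) atTop (nhds K))

include hK hf_cont hf_zero hf_below hdiff in
lemma aux_C3a : ∀ y : ℝ, 0 < y → y < K → y < f (f y) := by
  have hper := aux_per2 f K hdiff
  intro y₀ hy₀ hy₀K
  by_contra hc
  push_neg at hc
  have hlt : f (f y₀) < y₀ := by
    rcases lt_or_eq_of_le hc with h | h
    · exact h
    · exact absurd (hper y₀ hy₀ h) (ne_of_lt hy₀K)
  -- find a small point with f (f y) > y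
  have hcont0 : Tendsto f (nhds 0) (nhds 0) := by
    have := hf_cont.tendsto 0
    rwa [hf_zero] at this
  have hev : ∀ᶠ y in nhds (0:ℝ), f y < K := hcont0.eventually_lt_const hK
  obtain ⟨δ, hδ, hball⟩ := Metric.eventually_nhds_iff.mp hev
  set y₁ := min δ y₀ / 2 with hy₁def
  have hy₁pos : 0 < y₁ := by positivity
  have hy₁δ : y₁ < δ := by
    have : min δ y₀ ≤ δ := min_le_left _ _
    linarith
  have hy₁y₀ : y₁ < y₀ := by
    have : min δ y₀ ≤ y₀ := min_le_right _ _
    linarith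
  have hy₁K : y₁ < K := lt_trans hy₁y₀ hy₀K
  have hfy₁K : f y₁ < K := by
    apply hball
    rw [Real.dist_eq, sub_zero, abs_of_pos hy₁pos]
    exact hy₁δ
  have hfy₁ : y₁ < f y₁ := hf_below y₁ hy₁pos hy₁K
  have h2 : f y₁ < f (f y₁) := hf_below (f y₁) (lt_trans hy₁pos hfy₁) hfy₁K
  -- IVT for g = f ∘ f - id on [y₁, y₀]
  have hgc : ContinuousOn (fun y : ℝ => f (f y) - y) (Icc y₁ y₀) :=
    ((hf_cont.comp hf_cont).sub continuous_id).continuousOn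
  obtain ⟨z, hzmem, hz⟩ := intermediate_value_Icc' hy₁y₀.le hgc
    ⟨show f (f y₀) - y₀ ≤ 0 by linarith, show (0:ℝ) ≤ f (f y₁) - y₁ by linarith⟩
  have hzfix : f (f z) = z := by
    have h' : f (f z) - z = 0 := hz
    linarith
  have hzK : z = K := hper z (lt_of_lt_of_le hy₁pos hzmem.1) hzfix
  have : z < K := lt_of_le_of_lt hzmem.2 hy₀K
  exact absurd hzK (ne_of_lt this)

include hK hf_cont hf_zero hf_below hf_above hdiff in
lemma aux_C3b : ∀ y : ℝ, K < y → f (f y) < y := by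
  have hper := aux_per2 f K hdiff
  have anchor : ∃ y₃ : ℝ, K < y₃ ∧ f (f y₃) < y₃ := by
    by_contra hc
    push_neg at hc
    have key : ∀ y : ℝ, K < y → y < f (f y) := by
      intro y hy
      rcases lt_or_eq_of_le (hc y hy) with h | h
      · exact h
      · exact absurd (hper y (lt_trans hK hy) h.symm) (ne_of_gt hy)
    set z : ℕ → ℝ := fun n => f^[2 * n] (K + 1) with hzdef
    have hz : ∀ n : ℕ, K + 1 ≤ z n := by
      intro n
      induction n with
      | zero => simp [hzdef]
      | succ n ih =>
        have h1 : z (n + 1) = f (f (z n)) := by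
          simp only [hzdef, show 2 * (n + 1) = 2 + 2 * n by ring,
            Function.iterate_add_apply]
          rw [show (2 : ℕ) = 1 + 1 from rfl, Function.iterate_add_apply]
          simp
        have h2 : z n < f (f (z n)) := key (z n) (by linarith)
        linarith
    have hmono : Tendsto (fun n : ℕ => 2 * n) atTop atTop :=
      tendsto_atTop_mono (fun n : ℕ => by simp; omega) tendsto_id
    have hsub : Tendsto z atTop (nhds K) := (hdiff (K + 1) (by linarith)).comp hmono
    have : K + 1 ≤ K := ge_of_tendsto hsub (Eventually.of_forall hz)
    linarith
  obtain ⟨y₃, hy₃K, hy₃⟩ := anchor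
  intro y hy
  by_contra hcy
  push_neg at hcy
  have hlt : y < f (f y) := by
    rcases lt_or_eq_of_le hcy with h | h
    · exact h
    · exact absurd (hper y (lt_trans hK hy) h.symm) (ne_of_gt hy)
  have hgc2 : ∀ u v : ℝ, ContinuousOn (fun w : ℝ => f (f w) - w) (Icc u v) :=
    fun u v => ((hf_cont.comp hf_cont).sub continuous_id).continuousOn
  have hivt : (0:ℝ) ∈ (fun u : ℝ => f (f u) - u) '' Icc (min y y₃) (max y y₃) := by
    rcases le_total y y₃ with hord | hord
    · rw [min_eq_left hord, max_eq_right hord]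
      exact intermediate_value_Icc' hord (hgc2 y y₃)
        ⟨show f (f y₃) - y₃ ≤ 0 by linarith, show (0:ℝ) ≤ f (f y) - y by linarith⟩
    · rw [min_eq_right hord, max_eq_left hord]
      exact intermediate_value_Icc hord (hgc2 y₃ y)
        ⟨show f (f y₃) - y₃ ≤ 0 by linarith, show (0:ℝ) ≤ f (f y) - y by linarith⟩
  obtain ⟨z, hzmem, hz⟩ := hivt
  have hzfix : f (f z) = z := by
    have h' : f (f z) - z = 0 := hz
    linarith
  have hzgtK : K < z := lt_of_lt_of_le (lt_min hy hy₃K) hzmem.1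
  exact absurd (hper z (lt_trans hK hzgtK) hzfix) (ne_of_gt hzgtK)

include hK hf_cont hf_zero hf_below hf_above hdiff in
lemma aux_intervalD (a b : ℝ) (ha : 0 < a) (hab : a ≤ b)
    (hs : ∃ s ∈ Icc a b, b ≤ f s) (ht : ∃ t ∈ Icc a b, f t ≤ a) :
    a = K ∧ b = K := by
  have hfK : f K = K := aux_fixedK f K hK hf_cont hf_below hf_above
  obtain ⟨s, hsmem, hsb⟩ := hs
  obtain ⟨t, htmem, hta⟩ := ht
  have hsK : s ≤ K := by
    by_contra hcs
    push_neg at hcs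
    have := (hf_above s hcs).2
    have : f s < b := lt_of_lt_of_le this hsmem.2
    linarith
  have htK : K ≤ t := by
    by_contra hct
    push_neg at hct
    have := hf_below t (lt_of_lt_of_le ha htmem.1) hct
    have : t < a := lt_of_lt_of_le this hta
    linarith [htmem.1]
  have hivt : t ∈ f '' Icc s K := by
    apply intermediate_value_Icc' hsK hf_cont.continuousOn
    rw [hfK]
    exact ⟨htK, le_trans htmem.2 hsb⟩
  obtain ⟨σ, hσmem, hσ⟩ := hivt
  have hffσ : f (f σ) ≤ σ := by
    rw [hσ]
    exact le_trans hta (le_trans hsmem.1 hσmem.1)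
  have hσK : σ = K := by
    rcases lt_or_eq_of_le hσmem.2 with h | h
    · exfalso
      have := aux_C3a f K hK hf_cont hf_zero hf_below hdiff σ
        (lt_of_lt_of_le ha (le_trans hsmem.1 hσmem.1)) h
      linarith
    · exact h
  have htKeq : t = K := by rw [hσK, hfK] at hσ; exact hσ.symm
  have haK : a = K := by
    have h1 : a ≤ K := le_trans hsmem.1 hsK
    have h2 : K ≤ a := by rw [← hfK, ← htKeq]; exact hta
    linarith
  have hbK : b = K := by
    have hsKeq : s = K := le_antisymm hsK (haK ▸ hsmem.1)
    have h1 : b ≤ K := by rw [← hfK, ← hsKeq]; exact hsb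
    exact le_antisymm h1 (haK ▸ hab)
  exact ⟨haK, hbK⟩

end C3

section Dyn
variable (x r F : ℝ → ℝ)

/-- Maximum principle: if `F ≤ M` on `(t₀, t]`, then `x t ≤ max (x t₀) M`. -/
lemma aux_max_principle
    (hx_cont : Continuous x) (hr0 : ∀ u, 0 ≤ r u)
    (hadd : ∀ a b : ℝ, 0 ≤ a → a ≤ b → x b = x a + ∫ u in a..b, r u * (F u - x u))
    (t₀ t M : ℝ) (h0 : 0 ≤ t₀) (hle : t₀ ≤ t) (hF : ∀ u ∈ Ioc t₀ t, F u ≤ M) :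
    x t ≤ max (x t₀) M := by
  by_contra hc
  push_neg at hc
  set c := max (x t₀) M with hcdef
  set S := Icc t₀ t ∩ {u : ℝ | x u ≤ c} with hSdef
  have hSne : S.Nonempty := ⟨t₀, ⟨le_rfl, hle⟩, show x t₀ ≤ c from le_max_left _ _⟩
  have hSb : BddAbove S := ⟨t, fun u hu => hu.1.2⟩
  have hScl : IsClosed S := isClosed_Icc.inter (isClosed_le hx_cont continuous_const)
  set s := sSup S with hsdef
  have hsS : s ∈ S := hScl.csSup_mem hSne hSb
  obtain ⟨⟨hs0, hst⟩, hxs⟩ := hsS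
  have hxs' : x s ≤ c := hxs
  have hgt : ∀ u, s < u → u ≤ t → c < x u := by
    intro u h1 h2
    by_contra hxu
    push_neg at hxu
    have : u ≤ s := le_csSup hSb ⟨⟨hs0.trans h1.le, h2⟩, hxu⟩
    exact absurd h1 (not_lt.mpr this)
  have hslt : s < t := by
    rcases lt_or_eq_of_le hst with hlt' | heq
    · exact hlt'
    · exfalso; rw [heq] at hxs'; exact absurd hxs' (not_le.mpr hc)
  have heq := hadd s t (h0.trans hs0) hst
  have hI : (∫ u in s..t, r u * (F u - x u)) ≤ 0 := by
    rw [intervalIntegral.integral_of_le hst]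
    apply MeasureTheory.setIntegral_nonpos measurableSet_Ioc
    intro u hu
    have hcx : c < x u := hgt u hu.1 hu.2
    have hFu : F u ≤ M := hF u ⟨lt_of_le_of_lt hs0 hu.1, hu.2⟩
    have hMc : M ≤ c := le_max_right _ _
    have : F u - x u ≤ 0 := by linarith
    exact mul_nonpos_of_nonneg_of_nonpos (hr0 u) this
  have : x t ≤ c := by linarith
  exact absurd this (not_le.mpr hc)

/-- Minimum principle, by symmetry. -/
lemma aux_min_principle
    (hx_cont : Continuous x) (hr0 : ∀ u, 0 ≤ r u)
    (hadd : ∀ a b : ℝ, 0 ≤ a → a ≤ b → x b = x a + ∫ u in a..b, r u * (F u - x u))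
    (t₀ t m : ℝ) (h0 : 0 ≤ t₀) (hle : t₀ ≤ t) (hF : ∀ u ∈ Ioc t₀ t, m ≤ F u) :
    min (x t₀) m ≤ x t := by
  have hadd' : ∀ a b : ℝ, 0 ≤ a → a ≤ b →
      (fun v => -x v) b = (fun v => -x v) a +
        ∫ u in a..b, r u * ((fun v => -F v) u - (fun v => -x v) u) := by
    intro a b ha hab
    show -x b = -x a + ∫ u in a..b, r u * (-F u - -x u)
    have hfe : (fun u => r u * (-F u - -x u)) = fun u => -(r u * (F u - x u)) := by
      funext u; ring
    rw [hfe, intervalIntegral.integral_neg, hadd a b ha hab]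
    ring
  have h2 := aux_max_principle (fun v => -x v) r (fun v => -F v) hx_cont.neg hr0 hadd'
    t₀ t (-m) h0 hle (fun u hu => neg_le_neg (hF u hu))
  have h3 : -x t ≤ max (-x t₀) (-m) := h2
  rw [max_neg_neg] at h3
  linarith



/-- Eventually `x ≤ M + ε` if `F ≤ M` from `t₀` on. -/
lemma aux_ev_le
    (hx_cont : Continuous x) (hr0 : ∀ u, 0 ≤ r u)
    (hadd : ∀ a b : ℝ, 0 ≤ a → a ≤ b → x b = x a + ∫ u in a..b, r u * (F u - x u))
    (hint : ∀ a b : ℝ, 0 ≤ a → a ≤ b →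
      MeasureTheory.IntegrableOn (fun u => r u * (F u - x u)) (Ioc a b))
    (hrint : ∀ a b : ℝ, MeasureTheory.IntegrableOn r (Ioc a b))
    (hdiv : ∀ t₀ A : ℝ, 0 ≤ t₀ → ∃ T, t₀ ≤ T ∧ A ≤ ∫ u in t₀..T, r u)
    (t₀ M : ℝ) (h0 : 0 ≤ t₀) (hF : ∀ u, t₀ ≤ u → F u ≤ M) (ε : ℝ) (hε : 0 < ε) :
    ∃ t₁, t₀ ≤ t₁ ∧ ∀ t, t₁ ≤ t → x t ≤ M + ε := by
  obtain ⟨T, hT0, hTA⟩ := hdiv t₀ ((x t₀ - M) / ε) h0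
  have hex : ∃ t₁ ∈ Icc t₀ T, x t₁ ≤ M + ε := by
    by_contra hcc
    push_neg at hcc
    have hii1 : IntervalIntegrable (fun u => r u * (F u - x u)) MeasureTheory.volume t₀ T :=
      (intervalIntegrable_iff_integrableOn_Ioc_of_le hT0).mpr (hint t₀ T h0 hT0)
    have hii2 : IntervalIntegrable (fun u => -ε * r u) MeasureTheory.volume t₀ T :=
      (intervalIntegrable_iff_integrableOn_Ioc_of_le hT0).mpr ((hrint t₀ T).const_mul (-ε))
    have hIle : (∫ u in t₀..T, r u * (F u - x u)) ≤ ∫ u in t₀..T, -ε * r u := by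
      apply intervalIntegral.integral_mono_on hT0 hii1 hii2
      intro u hu
      have h1 : F u ≤ M := hF u hu.1
      have h2 : M + ε < x u := hcc u hu
      have h3 : F u - x u ≤ -ε := by linarith
      calc r u * (F u - x u) ≤ r u * (-ε) := by
            exact mul_le_mul_of_nonneg_left h3 (hr0 u)
        _ = -ε * r u := by ring
    have hconst : (∫ u in t₀..T, -ε * r u) = -ε * ∫ u in t₀..T, r u := by
      exact intervalIntegral.integral_const_mul _ _
    have heq := hadd t₀ T h0 hT0
    have hdiv2 : -ε * (∫ u in t₀..T, r u) ≤ -ε * ((x t₀ - M) / ε) := by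
      apply mul_le_mul_of_nonpos_left hTA (by linarith)
    have hcancel : ε * ((x t₀ - M) / ε) = x t₀ - M := by
      field_simp
    have hxT : x T ≤ M := by
      rw [hconst] at hIle
      nlinarith
    have := hcc T ⟨hT0, le_rfl⟩
    linarith
  obtain ⟨t₁, ht₁mem, ht₁⟩ := hex
  refine ⟨t₁, ht₁mem.1, fun t ht => ?_⟩
  have hmax := aux_max_principle x r F hx_cont hr0 hadd t₁ t M (h0.trans ht₁mem.1) ht
    (fun u hu => hF u (ht₁mem.1.trans hu.1.le))
  have : max (x t₁) M ≤ M + ε := max_le ht₁ (by linarith)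
  linarith

/-- Eventually `m - ε ≤ x` if `m ≤ F` from `t₀` on. -/
lemma aux_ev_ge
    (hx_cont : Continuous x) (hr0 : ∀ u, 0 ≤ r u)
    (hadd : ∀ a b : ℝ, 0 ≤ a → a ≤ b → x b = x a + ∫ u in a..b, r u * (F u - x u))
    (hint : ∀ a b : ℝ, 0 ≤ a → a ≤ b →
      MeasureTheory.IntegrableOn (fun u => r u * (F u - x u)) (Ioc a b))
    (hrint : ∀ a b : ℝ, MeasureTheory.IntegrableOn r (Ioc a b))
    (hdiv : ∀ t₀ A : ℝ, 0 ≤ t₀ → ∃ T, t₀ ≤ T ∧ A ≤ ∫ u in t₀..T, r u)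
    (t₀ m : ℝ) (h0 : 0 ≤ t₀) (hF : ∀ u, t₀ ≤ u → m ≤ F u) (ε : ℝ) (hε : 0 < ε) :
    ∃ t₁, t₀ ≤ t₁ ∧ ∀ t, t₁ ≤ t → m - ε ≤ x t := by
  have hadd' : ∀ a b : ℝ, 0 ≤ a → a ≤ b →
      (fun v => -x v) b = (fun v => -x v) a +
        ∫ u in a..b, r u * ((fun v => -F v) u - (fun v => -x v) u) := by
    intro a b ha hab
    show -x b = -x a + ∫ u in a..b, r u * (-F u - -x u)
    have hfe : (fun u => r u * (-F u - -x u)) = fun u => -(r u * (F u - x u)) := by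
      funext u; ring
    rw [hfe, intervalIntegral.integral_neg, hadd a b ha hab]
    ring
  have hint' : ∀ a b : ℝ, 0 ≤ a → a ≤ b →
      MeasureTheory.IntegrableOn
        (fun u => r u * ((fun v => -F v) u - (fun v => -x v) u)) (Ioc a b) := by
    intro a b ha hab
    have hfe : (fun u => r u * ((fun v => -F v) u - (fun v => -x v) u)) =
        -(fun u => r u * (F u - x u)) := by
      funext u; simp only [Pi.neg_apply]; ring
    rw [hfe]
    exact (hint a b ha hab).neg
  obtain ⟨t₁, ht₁0, ht₁⟩ := aux_ev_le (fun v => -x v) r (fun v => -F v) hx_cont.neg hr0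
    hadd' hint' hrint hdiv t₀ (-m) h0 (fun u hu => neg_le_neg (hF u hu)) ε hε
  refine ⟨t₁, ht₁0, fun t ht => ?_⟩
  have := ht₁ t ht
  linarith

/-- Strict positivity via dyadic level-crossing argument. -/
lemma aux_positivity
    (hx_cont : Continuous x) (hr0 : ∀ u, 0 ≤ r u)
    (hadd : ∀ a b : ℝ, 0 ≤ a → a ≤ b → x b = x a + ∫ u in a..b, r u * (F u - x u))
    (hint : ∀ a b : ℝ, 0 ≤ a → a ≤ b →
      MeasureTheory.IntegrableOn (fun u => r u * (F u - x u)) (Ioc a b))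
    (hrint : ∀ a b : ℝ, MeasureTheory.IntegrableOn r (Ioc a b))
    (hx0 : 0 < x 0) (hxneg : ∀ s : ℝ, s ≤ 0 → 0 ≤ x s)
    (hF0 : ∀ u : ℝ, 0 ≤ u → (∀ s, s ≤ u → 0 ≤ x s) → 0 ≤ F u) :
    ∀ t, 0 ≤ t → 0 < x t := by
  by_contra hc
  push_neg at hc
  obtain ⟨t', ht'0, ht'⟩ := hc
  set Z := Icc 0 t' ∩ {u : ℝ | x u ≤ 0} with hZdef
  have hZne : Z.Nonempty := ⟨t', ⟨ht'0, le_rfl⟩, ht'⟩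
  have hZbdd : BddBelow Z := ⟨0, fun u hu => hu.1.1⟩
  have hZcl : IsClosed Z := isClosed_Icc.inter (isClosed_le hx_cont continuous_const)
  set t₁ := sInf Z with ht₁def
  have ht₁Z : t₁ ∈ Z := hZcl.csInf_mem hZne hZbdd
  have ht₁0 : 0 ≤ t₁ := ht₁Z.1.1
  have ht₁le : x t₁ ≤ 0 := ht₁Z.2
  have ht₁pos : 0 < t₁ := by
    rcases lt_or_eq_of_le ht₁0 with h | h
    · exact h
    · exfalso; rw [← h] at ht₁le; linarith
  have hbefore : ∀ u, 0 ≤ u → u < t₁ → 0 < x u := by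
    intro u hu hut
    by_contra hxu
    push_neg at hxu
    have huZ : u ∈ Z := ⟨⟨hu, le_trans hut.le ht₁Z.1.2⟩, hxu⟩
    exact absurd (csInf_le hZbdd huZ) (not_le.mpr hut)
  have ht₁ge : 0 ≤ x t₁ := by
    have hsub : Ico 0 t₁ ⊆ {u : ℝ | 0 ≤ x u} := fun u hu => (hbefore u hu.1 hu.2).le
    have hcl : IsClosed {u : ℝ | 0 ≤ x u} := isClosed_le continuous_const hx_cont
    have : closure (Ico 0 t₁) ⊆ {u : ℝ | 0 ≤ x u} := hcl.closure_subset_iff.mpr hsub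
    have hmem : t₁ ∈ closure (Ico 0 t₁) := by
      rw [closure_Ico (ne_of_lt ht₁pos)]
      exact ⟨ht₁0, le_rfl⟩
    exact this hmem
  have ht₁eq : x t₁ = 0 := le_antisymm ht₁le ht₁ge
  have hnon : ∀ s, s ≤ t₁ → 0 ≤ x s := by
    intro s hs
    rcases le_or_gt s 0 with h | h
    · exact hxneg s h
    · rcases lt_or_eq_of_le hs with h2 | h2
      · exact (hbefore s h.le h2).le
      · rw [h2, ht₁eq]
  have hFn : ∀ u ∈ Icc 0 t₁, 0 ≤ F u := fun u hu =>
    hF0 u hu.1 (fun s hs => hnon s (hs.trans hu.2))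
  -- dyadic levels
  set d : ℕ → ℝ := fun k => x 0 / 2 ^ k with hddef
  have hd : ∀ k, 0 < d k := fun k => by positivity
  have hdsucc : ∀ k, d (k + 1) = d k / 2 := by
    intro k
    show x 0 / 2 ^ (k+1) = x 0 / 2 ^ k / 2
    rw [pow_succ, ← div_div]
  set A : ℕ → Set ℝ := fun k => Icc 0 t₁ ∩ {u : ℝ | d k ≤ x u} with hAdef
  have hAne : ∀ k, (A k).Nonempty := by
    intro k
    refine ⟨0, ⟨le_rfl, ht₁pos.le⟩, ?_⟩
    show d k ≤ x 0
    exact div_le_self hx0.le (one_le_pow₀ (by norm_num))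
  have hAbdd : ∀ k, BddAbove (A k) := fun k => ⟨t₁, fun u hu => hu.1.2⟩
  have hAcl : ∀ k, IsClosed (A k) := fun k =>
    isClosed_Icc.inter (isClosed_le continuous_const hx_cont)
  set τ : ℕ → ℝ := fun k => sSup (A k) with hτdef
  have hτA : ∀ k, τ k ∈ A k := fun k => (hAcl k).csSup_mem (hAne k) (hAbdd k)
  have hτ0 : ∀ k, 0 ≤ τ k := fun k => (hτA k).1.1
  have hτt₁ : ∀ k, τ k < t₁ := by
    intro k
    rcases lt_or_eq_of_le (hτA k).1.2 with h | h
    · exact h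
    · exfalso
      have h2 : d k ≤ x (τ k) := (hτA k).2
      rw [h, ht₁eq] at h2
      exact absurd h2 (not_le.mpr (hd k))
  have hafter : ∀ k u, τ k < u → u ≤ t₁ → x u < d k := by
    intro k u h1 h2
    by_contra hxu
    push_neg at hxu
    have : u ∈ A k := ⟨⟨le_trans (hτ0 k) h1.le, h2⟩, hxu⟩
    exact absurd (le_csSup (hAbdd k) this) (not_le.mpr h1)
  have hτmono : ∀ k, τ k ≤ τ (k + 1) := by
    intro k
    apply csSup_le_csSup (hAbdd (k + 1)) (hAne k)
    intro u hu
    have h2 : d (k + 1) ≤ d k := by rw [hdsucc k]; linarith [hd k]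
    exact ⟨hu.1, le_trans h2 (hu.2 : d k ≤ x u)⟩
  have hτeq : ∀ k, x (τ k) = d k := by
    intro k
    refine le_antisymm ?_ (hτA k).2
    by_contra hgt
    push_neg at hgt
    have hO : IsOpen {u : ℝ | d k < x u} := isOpen_lt continuous_const hx_cont
    obtain ⟨η, hη, hball⟩ := Metric.isOpen_iff.mp hO (τ k) hgt
    set u := min (τ k + η / 2) t₁ with hudef
    have hu1 : τ k < u := lt_min (by linarith) (hτt₁ k)
    have hu2 : u ≤ t₁ := min_le_right _ _
    have hu3 : u ∈ Metric.ball (τ k) η := by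
      rw [Metric.mem_ball, Real.dist_eq, abs_of_pos (by linarith)]
      have : u ≤ τ k + η / 2 := min_le_left _ _
      linarith
    have := hball hu3
    exact absurd (hafter k u hu1 hu2) (not_lt.mpr (le_of_lt this))
  have hτmono' : Monotone τ := monotone_nat_of_le_succ hτmono
  -- each level crossing forces ∫ r ≥ 1/2
  have hhalf : ∀ k, (1:ℝ) / 2 ≤ ∫ u in (τ k)..(τ (k + 1)), r u := by
    intro k
    have hb : ∀ u ∈ Icc (τ k) (τ (k + 1)), x u ≤ d k := by
      intro u hu
      rcases eq_or_lt_of_le hu.1 with h | h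
      · rw [← h, hτeq k]
      · exact (hafter k u h (le_trans hu.2 (hτt₁ (k + 1)).le)).le
    have hG : ∀ u ∈ Icc (τ k) (τ (k + 1)), -(d k) * r u ≤ r u * (F u - x u) := by
      intro u hu
      have hF := hFn u ⟨le_trans (hτ0 k) hu.1, le_trans hu.2 (hτt₁ (k + 1)).le⟩
      have h1 := hb u hu
      calc -(d k) * r u = r u * (-(d k)) := by ring
        _ ≤ r u * (F u - x u) := mul_le_mul_of_nonneg_left (by linarith) (hr0 u)
    have hii1 : IntervalIntegrable (fun u => -(d k) * r u)
        MeasureTheory.volume (τ k) (τ (k + 1)) :=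
      (intervalIntegrable_iff_integrableOn_Ioc_of_le (hτmono k)).mpr
        ((hrint _ _).const_mul _)
    have hii2 : IntervalIntegrable (fun u => r u * (F u - x u))
        MeasureTheory.volume (τ k) (τ (k + 1)) :=
      (intervalIntegrable_iff_integrableOn_Ioc_of_le (hτmono k)).mpr
        (hint _ _ (hτ0 k) (hτmono k))
    have hImono := intervalIntegral.integral_mono_on (hτmono k) hii1 hii2 hG
    have hconst : (∫ u in (τ k)..(τ (k + 1)), -(d k) * r u) =
        -(d k) * ∫ u in (τ k)..(τ (k + 1)), r u := intervalIntegral.integral_const_mul _ _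
    have heq := hadd (τ k) (τ (k + 1)) (hτ0 k) (hτmono k)
    rw [hτeq k, hτeq (k + 1)] at heq
    have hkey : d k * (1 / 2) ≤ d k * ∫ u in (τ k)..(τ (k + 1)), r u := by
      rw [hconst] at hImono
      have := hdsucc k
      nlinarith
    exact le_of_mul_le_mul_left hkey (hd k)
  -- sum up the crossings
  have hrii : ∀ a b : ℝ, IntervalIntegrable r MeasureTheory.volume a b := by
    intro a b
    rcases le_total a b with h | h
    · exact (intervalIntegrable_iff_integrableOn_Ioc_of_le h).mpr (hrint a b)
    · exact ((intervalIntegrable_iff_integrableOn_Ioc_of_le h).mpr (hrint b a)).symm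
  have hsum : ∀ n : ℕ, (n : ℝ) / 2 ≤ ∫ u in (τ 0)..(τ n), r u := by
    intro n
    induction n with
    | zero => norm_num [intervalIntegral.integral_same]
    | succ n ih =>
      have hsplit : (∫ u in (τ 0)..(τ n), r u) + ∫ u in (τ n)..(τ (n + 1)), r u =
          ∫ u in (τ 0)..(τ (n + 1)), r u :=
        intervalIntegral.integral_add_adjacent_intervals (hrii _ _) (hrii _ _)
      have := hhalf n
      push_cast
      linarith
  have hbound : ∀ n : ℕ, (∫ u in (τ 0)..(τ n), r u) ≤ ∫ u in (0:ℝ)..t₁, r u := by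
    intro n
    have h1 : (∫ u in (0:ℝ)..(τ 0), r u) + ∫ u in (τ 0)..(τ n), r u =
        ∫ u in (0:ℝ)..(τ n), r u :=
      intervalIntegral.integral_add_adjacent_intervals (hrii _ _) (hrii _ _)
    have h2 : (∫ u in (0:ℝ)..(τ n), r u) + ∫ u in (τ n)..t₁, r u =
        ∫ u in (0:ℝ)..t₁, r u :=
      intervalIntegral.integral_add_adjacent_intervals (hrii _ _) (hrii _ _)
    have h3 : 0 ≤ ∫ u in (0:ℝ)..(τ 0), r u :=
      intervalIntegral.integral_nonneg (hτ0 0) (fun u _ => hr0 u)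
    have h4 : 0 ≤ ∫ u in (τ n)..t₁, r u :=
      intervalIntegral.integral_nonneg (hτt₁ n).le (fun u _ => hr0 u)
    linarith
  obtain ⟨n, hn⟩ := exists_nat_gt (2 * ∫ u in (0:ℝ)..t₁, r u)
  have := hsum n
  have := hbound n
  linarith

end Dyn

theorem distributed_delay_stability_from_difference_equation
    (f : ℝ → ℝ) (L K : ℝ) (hL : 0 ≤ L) (hK : 0 < K)
    (h r : ℝ → ℝ) (μ : ℝ → Measure ℝ) (φ : ℝ → ℝ)
    (hf_cont : Continuous f)
    (hf_nonneg : ∀ y : ℝ, 0 ≤ y → 0 ≤ f y)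
    (hf_lip : ∀ u v : ℝ, 0 ≤ u → 0 ≤ v → |f u - f v| ≤ L * |u - v|)
    (hf_zero : f 0 = 0)
    (hf_below : ∀ y : ℝ, 0 < y → y < K → y < f y)
    (hf_above : ∀ y : ℝ, K < y → 0 < f y ∧ f y < y)
    (hh_meas : Measurable h)
    (hh_le : ∀ t : ℝ, 0 ≤ t → h t ≤ t)
    (hh_tend : Tendsto h atTop atTop)
    (hr_meas : Measurable r)
    (hr_nonneg : ∀ t : ℝ, 0 ≤ r t)
    (hr_bdd : ∃ C : ℝ, ∀ᵐ t ∂volume, r t ≤ C)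
    (hr_div : ¬ IntegrableOn r (Ici (0 : ℝ)))
    (hμ_prob : ∀ t : ℝ, 0 ≤ t → IsProbabilityMeasure (μ t))
    (hμ_supp : ∀ t : ℝ, 0 ≤ t → μ t (Icc (h t) t)ᶜ = 0)
    (hμ_meas : ∀ g : ℝ → ℝ, Measurable g → (∃ C : ℝ, ∀ y : ℝ, |g y| ≤ C) →
      Measurable (fun t => ∫ s, g s ∂(μ t)))
    (hφ_cont : ContinuousOn φ (Iic (0 : ℝ)))
    (hφ_bdd : ∃ C : ℝ, ∀ t : ℝ, t ≤ 0 → |φ t| ≤ C)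
    (hφ_nonneg : ∀ t : ℝ, t ≤ 0 → 0 ≤ φ t)
    (hφ_pos : 0 < φ 0)
    (hdiff : ∀ x₀ : ℝ, 0 < x₀ → Tendsto (fun n => f^[n] x₀) atTop (nhds K))
    (x : ℝ → ℝ)
    (hx_cont : Continuous x)
    (hx_init : ∀ t : ℝ, t ≤ 0 → x t = φ t)
    (hx_sol : ∀ t : ℝ, 0 ≤ t →
      x t = φ 0 + ∫ u in (0:ℝ)..t, r u * ((∫ s, f (x s) ∂(μ u)) - x u))
    :
    Tendsto x atTop (nhds K) := by
  classical
  obtain ⟨Cr₀, hCr₀⟩ := hr_bdd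
  set Cr := max Cr₀ 0 with hCrdef
  have hCr : ∀ᵐ t ∂(volume : Measure ℝ), r t ≤ Cr := by
    filter_upwards [hCr₀] with t ht using le_trans ht (le_max_left _ _)
  have hCrnn : 0 ≤ Cr := le_max_right _ _
  obtain ⟨Cφ, hCφ⟩ := hφ_bdd
  have hCφ0 : 0 ≤ Cφ := le_trans (abs_nonneg _) (hCφ 0 le_rfl)
  have hx0 : x 0 = φ 0 := by
    have := hx_sol 0 le_rfl
    simpa using this
  have hx0pos : 0 < x 0 := by rw [hx0]; exact hφ_pos
  set F : ℝ → ℝ := fun u => ∫ s, f (x s) ∂(μ u) with hFdef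
  -- a.e. support of μ u
  have hsupp_ae : ∀ u : ℝ, 0 ≤ u → ∀ᵐ s ∂(μ u), s ∈ Icc (h u) u := by
    intro u hu
    rw [ae_iff]
    have he : {s : ℝ | ¬ s ∈ Icc (h u) u} = (Icc (h u) u)ᶜ := by ext s; simp
    rw [he]
    exact hμ_supp u hu
  -- bound for |x| on (-∞, b]
  have hxIic : ∀ b : ℝ, 0 ≤ b → ∃ X : ℝ, 0 ≤ X ∧ ∀ s, s ≤ b → |x s| ≤ X := by
    intro b hb
    obtain ⟨c, hcmem, hc⟩ := aux_exists_max (fun s => |x s|) hx_cont.abs hb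
    refine ⟨max Cφ |x c|, le_trans hCφ0 (le_max_left _ _), fun s hs => ?_⟩
    rcases le_or_gt s 0 with h1 | h1
    · rw [hx_init s h1]
      exact le_trans (hCφ s h1) (le_max_left _ _)
    · exact le_trans (hc s ⟨h1.le, hs⟩) (le_max_right _ _)
  have hfx_cont : Continuous fun s => f (x s) := hf_cont.comp hx_cont
  -- integrability of f ∘ x wrt μ u
  have hInt : ∀ u : ℝ, 0 ≤ u → Integrable (fun s => f (x s)) (μ u) := by
    intro u hu
    haveI := hμ_prob u hu
    obtain ⟨c, hcmem, hc⟩ := aux_exists_max (fun s => |f (x s)|) hfx_cont.abs (hh_le u hu)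
    refine (integrable_const (|f (x c)|)).mono' hfx_cont.aestronglyMeasurable ?_
    filter_upwards [hsupp_ae u hu] with s hs
    simpa [Real.norm_eq_abs] using hc s hs
  have hFle : ∀ u : ℝ, 0 ≤ u → ∀ c : ℝ, (∀ s ∈ Icc (h u) u, f (x s) ≤ c) → F u ≤ c := by
    intro u hu c hc
    haveI := hμ_prob u hu
    have h1 : F u ≤ ∫ _ : ℝ, c ∂(μ u) := by
      apply integral_mono_ae (hInt u hu) (integrable_const c)
      filter_upwards [hsupp_ae u hu] with s hs using hc s hs
    simpa using h1
  have hFge : ∀ u : ℝ, 0 ≤ u → ∀ c : ℝ, (∀ s ∈ Icc (h u) u, c ≤ f (x s)) → c ≤ F u := by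
    intro u hu c hc
    haveI := hμ_prob u hu
    have h1 : (∫ _ : ℝ, c ∂(μ u)) ≤ F u := by
      apply integral_mono_ae (integrable_const c) (hInt u hu)
      filter_upwards [hsupp_ae u hu] with s hs using hc s hs
    simpa using h1
  -- integrability of r on bounded intervals
  have hrint : ∀ a b : ℝ, IntegrableOn r (Ioc a b) := by
    intro a b
    refine (integrable_const Cr).mono' hr_meas.aestronglyMeasurable.restrict ?_
    filter_upwards [ae_restrict_of_ae hCr] with u hu
    rw [Real.norm_eq_abs, abs_of_nonneg (hr_nonneg u)]
    exact hu
  -- integrability of the integrand on [a,b] ⊆ [0,∞)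
  have hG_int : ∀ a b : ℝ, 0 ≤ a → a ≤ b →
      IntegrableOn (fun u => r u * (F u - x u)) (Ioc a b) := by
    intro a b ha hab
    have hb0 : 0 ≤ b := ha.trans hab
    set g : ℝ → ℝ := fun s => f (x (min s b)) with hgdef
    have hg_cont : Continuous g := hf_cont.comp (hx_cont.comp (continuous_id.min continuous_const))
    obtain ⟨X, hX0, hX⟩ := hxIic b hb0
    obtain ⟨y₁, hy₁mem, hy₁⟩ := aux_exists_max (fun y => |f y|) hf_cont.abs
      (show -X ≤ X by linarith)
    have hgbd : ∀ s : ℝ, |g s| ≤ |f y₁| := by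
      intro s
      exact hy₁ (x (min s b)) (abs_le.mp (hX _ (min_le_right s b)))
    have hmeasI : Measurable fun u => ∫ s, g s ∂(μ u) :=
      hμ_meas g hg_cont.measurable ⟨|f y₁|, hgbd⟩
    have hcongr : ∀ u ∈ Ioc a b, (∫ s, g s ∂(μ u)) = F u := by
      intro u hu
      have hu0 : 0 ≤ u := ha.trans hu.1.le
      apply integral_congr_ae
      filter_upwards [hsupp_ae u hu0] with s hs
      have hsb : s ≤ b := le_trans hs.2 hu.2
      simp [hgdef, min_eq_left hsb]
    set G' : ℝ → ℝ := fun u => r u * ((∫ s, g s ∂(μ u)) - x u) with hG'def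
    have hG'meas : Measurable G' := hr_meas.mul (hmeasI.sub hx_cont.measurable)
    have hG'int : IntegrableOn G' (Ioc a b) := by
      refine (integrable_const (Cr * (|f y₁| + X))).mono'
        hG'meas.aestronglyMeasurable.restrict ?_
      filter_upwards [ae_restrict_of_ae hCr, ae_restrict_mem measurableSet_Ioc] with u hru hu
      have hu0 : 0 ≤ u := ha.trans hu.1.le
      haveI := hμ_prob u hu0
      have h1 : |∫ s, g s ∂(μ u)| ≤ |f y₁| := by
        have h0 := norm_integral_le_of_norm_le_const (μ := μ u) (C := |f y₁|) (f := g)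
          (Eventually.of_forall fun s => by simpa using hgbd s)
        calc |∫ s, g s ∂(μ u)| = ‖∫ s, g s ∂(μ u)‖ := (Real.norm_eq_abs _).symm
          _ ≤ |f y₁| * (μ u univ).toReal := h0
          _ = |f y₁| := by rw [measure_univ]; simp
      have h2 : |x u| ≤ X := hX u hu.2
      have h3 : |(∫ s, g s ∂(μ u)) - x u| ≤ |f y₁| + X :=
        le_trans (abs_sub _ _) (by linarith)
      rw [Real.norm_eq_abs, hG'def]
      calc |r u * ((∫ s, g s ∂(μ u)) - x u)|
          = r u * |(∫ s, g s ∂(μ u)) - x u| := by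
            rw [abs_mul, abs_of_nonneg (hr_nonneg u)]
        _ ≤ Cr * (|f y₁| + X) := by
            apply mul_le_mul hru h3 (abs_nonneg _) hCrnn
    apply hG'int.congr_fun ?_ measurableSet_Ioc
    intro u hu
    simp only [hG'def, hcongr u hu]
  -- the integral identity
  have hii : ∀ a b : ℝ, 0 ≤ a → a ≤ b →
      IntervalIntegrable (fun u => r u * (F u - x u)) volume a b := by
    intro a b ha hab
    exact (intervalIntegrable_iff_integrableOn_Ioc_of_le hab).mpr (hG_int a b ha hab)
  have hadd : ∀ a b : ℝ, 0 ≤ a → a ≤ b →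
      x b = x a + ∫ u in a..b, r u * (F u - x u) := by
    intro a b ha hab
    have h1 := hx_sol a ha
    have h2 := hx_sol b (ha.trans hab)
    have h3 := intervalIntegral.integral_add_adjacent_intervals
      (hii 0 a le_rfl ha) (hii a b ha hab)
    rw [h2, ← h3, h1]
    ring
  -- divergence of ∫ r
  have hdivg : ∀ t₀ A : ℝ, 0 ≤ t₀ → ∃ T, t₀ ≤ T ∧ A ≤ ∫ u in t₀..T, r u := by
    intro t₀ A h0
    by_contra hc
    push_neg at hc
    have hIoi : IntegrableOn r (Ioi t₀) := by
      apply integrableOn_Ioi_of_intervalIntegral_norm_bounded A t₀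
        (fun i : ℕ => hrint t₀ (t₀ + i))
        (tendsto_atTop_add_const_left atTop t₀ tendsto_natCast_atTop_atTop)
      refine Eventually.of_forall fun i => ?_
      have hnorm : (∫ u in t₀..(t₀ + (i:ℝ)), ‖r u‖) = ∫ u in t₀..(t₀ + (i:ℝ)), r u := by
        apply intervalIntegral.integral_congr
        intro u _
        exact Real.norm_of_nonneg (hr_nonneg u)
      rw [hnorm]
      exact (hc (t₀ + i) (le_add_of_nonneg_right (Nat.cast_nonneg i))).le
    have hIcc : IntegrableOn r (Icc 0 t₀) := by
      refine (integrable_const Cr).mono' hr_meas.aestronglyMeasurable.restrict ?_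
      filter_upwards [ae_restrict_of_ae hCr] with u hu
      rw [Real.norm_eq_abs, abs_of_nonneg (hr_nonneg u)]
      exact hu
    have hsub : Ici (0:ℝ) ⊆ Icc 0 t₀ ∪ Ioi t₀ := by
      intro y hy
      rcases le_or_gt y t₀ with h1 | h1
      · exact Or.inl ⟨hy, h1⟩
      · exact Or.inr h1
    exact hr_div ((hIcc.union hIoi).mono_set hsub)
  -- positivity
  have hxneg0 : ∀ s : ℝ, s ≤ 0 → 0 ≤ x s := by
    intro s hs
    rw [hx_init s hs]
    exact hφ_nonneg s hs
  have hF0 : ∀ u : ℝ, 0 ≤ u → (∀ s, s ≤ u → 0 ≤ x s) → 0 ≤ F u := by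
    intro u hu hxs
    exact hFge u hu 0 (fun s hs => hf_nonneg _ (hxs s hs.2))
  have hpos : ∀ t, 0 ≤ t → 0 < x t :=
    aux_positivity x r F hx_cont hr_nonneg hadd hG_int hrint hx0pos hxneg0 hF0
  have hfK : f K = K := aux_fixedK f K hK hf_cont hf_below hf_above
  -- global upper bound
  obtain ⟨yK, hyKmem, hyK⟩ := aux_exists_max f hf_cont (le_of_lt hK : (0:ℝ) ≤ K)
  set CK := f yK with hCKdef
  have hCKK : K ≤ CK := by rw [← hfK]; exact hyK K ⟨hK.le, le_rfl⟩
  set B := max (max (x 0) Cφ) (max CK K) with hBdef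
  have hBx0 : x 0 ≤ B := le_trans (le_max_left _ _) (le_max_left _ _)
  have hBCφ : Cφ ≤ B := le_trans (le_max_right _ _) (le_max_left _ _)
  have hBCK : CK ≤ B := le_trans (le_max_left _ _) (le_max_right _ _)
  have hBK : K ≤ B := le_trans (le_max_right _ _) (le_max_right _ _)
  have hbd : ∀ t, 0 ≤ t → x t ≤ B := by
    intro t₂ ht₂
    by_contra hcB
    push_neg at hcB
    obtain ⟨tm, htmmem, htm⟩ := aux_exists_max x hx_cont ht₂
    set V := x tm with hVdef
    have hVB : B < V := lt_of_lt_of_le hcB (htm t₂ ⟨ht₂, le_rfl⟩)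
    obtain ⟨ξ, hξmem, hξ⟩ := aux_exists_max f hf_cont (le_trans hBK hVB.le : K ≤ V)
    have hΦV : f ξ < V := by
      rcases eq_or_lt_of_le hξmem.1 with hc1 | hc1
      · rw [← hc1, hfK]
        exact lt_of_le_of_lt hBK hVB
      · exact lt_of_lt_of_le (hf_above ξ hc1).2 hξmem.2
    set M := max CK (f ξ) with hMdef
    have hFM : ∀ u ∈ Ioc (0:ℝ) tm, F u ≤ M := by
      intro u hu
      apply hFle u hu.1.le
      intro s hs
      have hsu : s ≤ tm := hs.2.trans hu.2
      have hxs_nonneg : 0 ≤ x s := by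
        rcases le_or_gt s 0 with h1 | h1
        · exact hxneg0 s h1
        · exact (hpos s h1.le).le
      have hxs_le : x s ≤ V := by
        rcases le_or_gt s 0 with h1 | h1
        · rw [hx_init s h1]
          exact le_trans (le_trans (le_abs_self _) (hCφ s h1)) (le_trans hBCφ hVB.le)
        · exact htm s ⟨h1.le, hsu.trans htmmem.2⟩
      rcases le_or_gt (x s) K with h2 | h2
      · exact le_trans (hyK (x s) ⟨hxs_nonneg, h2⟩) (le_max_left _ _)
      · exact le_trans (hξ (x s) ⟨h2.le, hxs_le⟩) (le_max_right _ _)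
    have hmax := aux_max_principle x r F hx_cont hr_nonneg hadd 0 tm M le_rfl htmmem.1 hFM
    have h1 : max (x 0) M < V := by
      apply max_lt (lt_of_le_of_lt hBx0 hVB)
      apply max_lt (lt_of_le_of_lt hBCK hVB) hΦV
    rw [← hVdef] at hmax
    exact absurd hmax (not_le.mpr h1)
  -- persistence
  obtain ⟨T₁', hT₁'⟩ := eventually_atTop.mp (hh_tend.eventually_ge_atTop 0)
  set T₁ := max T₁' 0 with hT₁def
  have hT₁0 : (0:ℝ) ≤ T₁ := le_max_right _ _
  obtain ⟨sρ, hsρmem, hsρ⟩ := aux_exists_min x hx_cont hT₁0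
  set ρ := x sρ with hρdef
  have hρpos : 0 < ρ := hpos sρ hsρmem.1
  obtain ⟨tc, htcmem, htc⟩ := aux_exists_min f hf_cont hBK
  set c₀ := f tc with hc₀def
  have hc₀pos : 0 < c₀ := by
    rcases eq_or_lt_of_le htcmem.1 with h1 | h1
    · rw [hc₀def, ← h1, hfK]; exact hK
    · exact (hf_above tc h1).1
  set δ := min (min ρ c₀) (min K (x 0)) / 2 with hδdef
  have hδpos : 0 < δ := by
    apply div_pos _ (by norm_num)
    exact lt_min (lt_min hρpos hc₀pos) (lt_min hK hx0pos)
  have hδρ : δ < ρ := by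
    have h1 : min (min ρ c₀) (min K (x 0)) ≤ ρ := le_trans (min_le_left _ _) (min_le_left _ _)
    rw [hδdef]; linarith
  have hδc₀ : δ < c₀ := by
    have h1 : min (min ρ c₀) (min K (x 0)) ≤ c₀ := le_trans (min_le_left _ _) (min_le_right _ _)
    rw [hδdef]; linarith
  have hδK : δ < K := by
    have h1 : min (min ρ c₀) (min K (x 0)) ≤ K := le_trans (min_le_right _ _) (min_le_left _ _)
    rw [hδdef]; linarith
  have hδx0 : δ < x 0 := by
    have h1 : min (min ρ c₀) (min K (x 0)) ≤ x 0 :=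
      le_trans (min_le_right _ _) (min_le_right _ _)
    rw [hδdef]; linarith
  obtain ⟨yψ, hyψmem, hyψ⟩ := aux_exists_min f hf_cont hδK.le
  have hψδ : δ < f yψ := by
    rcases lt_or_eq_of_le hyψmem.2 with h1 | h1
    · exact lt_of_le_of_lt hyψmem.1 (hf_below yψ (lt_of_lt_of_le hδpos hyψmem.1) h1)
    · rw [h1, hfK]; exact hδK
  set m₁ := min (f yψ) c₀ with hm₁def
  have hm₁δ : δ < m₁ := lt_min hψδ hδc₀
  have hpers : ∀ t, 0 ≤ t → δ < x t := by
    by_contra hcp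
    push_neg at hcp
    obtain ⟨t', ht'0, ht'⟩ := hcp
    set S := Icc 0 t' ∩ {u : ℝ | x u ≤ δ} with hSdef
    have hSne : S.Nonempty := ⟨t', ⟨ht'0, le_rfl⟩, ht'⟩
    have hSbdd : BddBelow S := ⟨0, fun u hu => hu.1.1⟩
    have hScl : IsClosed S := isClosed_Icc.inter (isClosed_le hx_cont continuous_const)
    set t₂ := sInf S with ht₂def
    have ht₂S : t₂ ∈ S := hScl.csInf_mem hSne hSbdd
    have ht₂0 : 0 ≤ t₂ := ht₂S.1.1
    have ht₂le : x t₂ ≤ δ := ht₂S.2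
    have hbefore : ∀ u, 0 ≤ u → u < t₂ → δ < x u := by
      intro u hu hut
      by_contra hxu
      push_neg at hxu
      have huS : u ∈ S := ⟨⟨hu, hut.le.trans ht₂S.1.2⟩, hxu⟩
      exact absurd (csInf_le hSbdd huS) (not_le.mpr hut)
    have ht₂pos : 0 < t₂ := by
      rcases lt_or_eq_of_le ht₂0 with h1 | h1
      · exact h1
      · exfalso; rw [← h1] at ht₂le; linarith
    have ht₂ge : δ ≤ x t₂ := by
      have hsub2 : Ico 0 t₂ ⊆ {u : ℝ | δ ≤ x u} := fun u hu => (hbefore u hu.1 hu.2).le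
      have hcl2 : IsClosed {u : ℝ | δ ≤ x u} := isClosed_le continuous_const hx_cont
      have hmem2 : t₂ ∈ closure (Ico 0 t₂) := by
        rw [closure_Ico (ne_of_lt ht₂pos)]
        exact ⟨ht₂0, le_rfl⟩
      exact (hcl2.closure_subset_iff.mpr hsub2) hmem2
    have ht₂eq : x t₂ = δ := le_antisymm ht₂le ht₂ge
    have hT₁t₂ : T₁ < t₂ := by
      by_contra hcc
      push_neg at hcc
      have := hsρ t₂ ⟨ht₂0, hcc⟩
      rw [ht₂eq] at this
      exact absurd this (not_le.mpr (by linarith))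
    have hFm : ∀ u ∈ Ioc T₁ t₂, m₁ ≤ F u := by
      intro u hu
      apply hFge u (hT₁0.trans hu.1.le)
      intro s hs
      have hs0 : 0 ≤ s := le_trans (hT₁' u (le_trans (le_max_left _ _) hu.1.le)) hs.1
      have hst₂ : s ≤ t₂ := hs.2.trans hu.2
      have hxsδ : δ ≤ x s := by
        rcases lt_or_eq_of_le hst₂ with h1 | h1
        · exact (hbefore s hs0 h1).le
        · rw [h1, ht₂eq]
      have hxsB : x s ≤ B := hbd s hs0
      rcases le_or_gt (x s) K with h2 | h2
      · exact le_trans (min_le_left _ _) (hyψ (x s) ⟨hxsδ, h2⟩)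
      · exact le_trans (min_le_right _ _) (htc (x s) ⟨h2.le, hxsB⟩)
    have hmin := aux_min_principle x r F hx_cont hr_nonneg hadd T₁ t₂ m₁ hT₁0 hT₁t₂.le hFm
    rw [ht₂eq] at hmin
    have hxT₁ : δ < x T₁ := lt_of_lt_of_le hδρ (hsρ T₁ ⟨hT₁0, le_rfl⟩)
    have : δ < min (x T₁) m₁ := lt_min hxT₁ hm₁δ
    linarith
  -- limsup / liminf
  have hev_ub : ∀ᶠ t in atTop, x t ≤ B := eventually_atTop.mpr ⟨0, fun t ht => hbd t ht⟩
  have hev_lb : ∀ᶠ t in atTop, δ ≤ x t := eventually_atTop.mpr ⟨0, fun t ht => (hpers t ht).le⟩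
  have hbdd_le : IsBoundedUnder (· ≤ ·) atTop x := ⟨B, eventually_map.mpr hev_ub⟩
  have hbdd_ge : IsBoundedUnder (· ≥ ·) atTop x := ⟨δ, eventually_map.mpr hev_lb⟩
  have hcob_ge : IsCoboundedUnder (· ≥ ·) atTop x := hbdd_le.isCoboundedUnder_ge
  have hcob_le : IsCoboundedUnder (· ≤ ·) atTop x := hbdd_ge.isCoboundedUnder_le
  set α := liminf x atTop with hαdef
  set β := limsup x atTop with hβdef
  have hαδ : δ ≤ α := le_liminf_of_le hcob_ge hev_lb
  have hαβ : α ≤ β := liminf_le_limsup hbdd_le hbdd_ge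
  have hα0 : 0 < α := lt_of_lt_of_le hδpos hαδ
  obtain ⟨s₀, hs₀mem, hs₀⟩ := aux_exists_max f hf_cont hαβ
  obtain ⟨t₀, ht₀mem, ht₀⟩ := aux_exists_min f hf_cont hαβ
  set L' := max L 1 with hL'def
  have hL'pos : (0:ℝ) < L' := lt_of_lt_of_le one_pos (le_max_right _ _)
  have hLL' : L ≤ L' := le_max_left _ _
  -- key eventual estimate on F
  have hFkey : ∀ η : ℝ, 0 < η → ∃ T₃ : ℝ, 0 ≤ T₃ ∧
      (∀ u, T₃ ≤ u → F u ≤ f s₀ + η) ∧ (∀ u, T₃ ≤ u → f t₀ - η ≤ F u) := by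
    intro η hη
    set ε := η / L' with hεdef
    have hεpos : 0 < ε := div_pos hη hL'pos
    have hev1 : ∀ᶠ t in atTop, x t < β + ε :=
      eventually_lt_of_limsup_lt (by linarith) hbdd_le
    have hev2 : ∀ᶠ t in atTop, α - ε < x t :=
      eventually_lt_of_lt_liminf (by linarith) hbdd_ge
    obtain ⟨T₂', hT₂'⟩ := eventually_atTop.mp (hev1.and hev2)
    set T₂ := max T₂' 0 with hT₂def
    obtain ⟨T₃', hT₃'⟩ := eventually_atTop.mp (hh_tend.eventually_ge_atTop T₂)
    set T₃ := max T₃' 0 with hT₃def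
    have hT₃0 : (0:ℝ) ≤ T₃ := le_max_right _ _
    have hwindow : ∀ u, T₃ ≤ u → ∀ s ∈ Icc (h u) u,
        0 < x s ∧ α - ε < x s ∧ x s < β + ε := by
      intro u hu s hs
      have hsT₂ : T₂ ≤ s := le_trans (hT₃' u (le_trans (le_max_left _ _) hu)) hs.1
      have hs0 : 0 ≤ s := le_trans (le_max_right T₂' 0) hsT₂
      have hps := hpos s hs0
      have h12 := hT₂' s (le_trans (le_max_left T₂' 0) hsT₂)
      exact ⟨hps, h12.2, h12.1⟩
    have hclamp : ∀ y : ℝ, 0 < y → α - ε < y → y < β + ε →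
        (f y ≤ f s₀ + η ∧ f t₀ - η ≤ f y) := by
      intro y hy h1 h2
      set y' := max α (min y β) with hy'def
      have hy'mem : y' ∈ Icc α β := ⟨le_max_left _ _, max_le hαβ (min_le_right _ _)⟩
      have hy'pos : 0 < y' := lt_of_lt_of_le hα0 hy'mem.1
      have hyy' : |y - y'| ≤ ε := by
        rcases le_or_gt y α with hc1 | hc1
        · have hmin : min y β = y := min_eq_left (hc1.trans hαβ)
          have : y' = α := by rw [hy'def, hmin, max_eq_left hc1]
          rw [this, abs_sub_comm, abs_of_nonneg (by linarith)]
          linarith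
        · rcases le_or_gt y β with hc2 | hc2
          · have : y' = y := by
              rw [hy'def, min_eq_left hc2, max_eq_right hc1.le]
            rw [this]
            simpa using hεpos.le
          · have : y' = β := by
              rw [hy'def, min_eq_right hc2.le, max_eq_right hαβ]
            rw [this, abs_of_nonneg (by linarith)]
            linarith
      have hlip := hf_lip y y' hy.le hy'pos.le
      have habs : |f y - f y'| ≤ L' * ε := by
        calc |f y - f y'| ≤ L * |y - y'| := hlip
          _ ≤ L' * ε := by
              apply mul_le_mul hLL' hyy' (abs_nonneg _) (le_of_lt hL'pos)
      have hcancel : L' * ε = η := by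
        rw [hεdef]
        field_simp
      rw [hcancel] at habs
      have h3 := abs_le.mp habs
      constructor
      · have := hs₀ y' hy'mem
        linarith [h3.2]
      · have := ht₀ y' hy'mem
        linarith [h3.1]
    refine ⟨T₃, hT₃0, ?_, ?_⟩
    · intro u hu
      apply hFle u (hT₃0.trans hu)
      intro s hs
      obtain ⟨hp1, hp2, hp3⟩ := hwindow u hu s hs
      exact (hclamp (x s) hp1 hp2 hp3).1
    · intro u hu
      apply hFge u (hT₃0.trans hu)
      intro s hs
      obtain ⟨hp1, hp2, hp3⟩ := hwindow u hu s hs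
      exact (hclamp (x s) hp1 hp2 hp3).2
  -- β ≤ f s₀
  have hK1 : β ≤ f s₀ := by
    by_contra hcc
    push_neg at hcc
    set η := (β - f s₀) / 3 with hηdef
    have hηpos : 0 < η := by rw [hηdef]; linarith
    obtain ⟨T₃, hT₃0, hub, _⟩ := hFkey η hηpos
    obtain ⟨t₁, _, ht₁⟩ := aux_ev_le x r F hx_cont hr_nonneg hadd hG_int hrint hdivg
      T₃ (f s₀ + η) hT₃0 hub η hηpos
    have hβle : β ≤ f s₀ + η + η := by
      apply limsup_le_of_le hcob_le
      exact eventually_atTop.mpr ⟨t₁, fun t ht => ht₁ t ht⟩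
    rw [hηdef] at hβle
    linarith
  -- f t₀ ≤ α
  have hK2 : f t₀ ≤ α := by
    by_contra hcc
    push_neg at hcc
    set η := (f t₀ - α) / 3 with hηdef
    have hηpos : 0 < η := by rw [hηdef]; linarith
    obtain ⟨T₃, hT₃0, _, hlb⟩ := hFkey η hηpos
    obtain ⟨t₁, _, ht₁⟩ := aux_ev_ge x r F hx_cont hr_nonneg hadd hG_int hrint hdivg
      T₃ (f t₀ - η) hT₃0 hlb η hηpos
    have hαge : f t₀ - η - η ≤ α := by
      apply le_liminf_of_le hcob_ge
      exact eventually_atTop.mpr ⟨t₁, fun t ht => ht₁ t ht⟩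
    rw [hηdef] at hαge
    linarith
  -- conclude via the interval rigidity lemma
  obtain ⟨hαK, hβK⟩ := aux_intervalD f K hK hf_cont hf_zero hf_below hf_above hdiff
    α β hα0 hαβ ⟨s₀, hs₀mem, hK1⟩ ⟨t₀, ht₀mem, hK2⟩
  exact tendsto_of_liminf_eq_limsup hαK hβK hbdd_le hbdd_ge
end

section
/- Suppose hypotheses (a2)–(a5) hold, f : ℝ → ℝ is continuous with f ≥ 0 on [0,∞), |f(u) − f(v)| ≤ L|u − v| for all u, v ≥ 0, f(0) = 0, and f(x) < x for every x > 0 (so f has no positive fixed point). Then every solution x of the initial value problem for the distributed-delay equation satisfies lim_{t→∞} x(t) = 0. -/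
open MeasureTheory Filter Set

lemma gronwall_aux (z : ℝ → ℝ) (K T : ℝ) (hK : 0 ≤ K) (hT : 0 ≤ T)
    (hz : Continuous z)
    (hnn : ∀ t ∈ Icc (0:ℝ) T, 0 ≤ z t)
    (hineq : ∀ t ∈ Icc (0:ℝ) T, z t ≤ ∫ u in t..T, K * z u) :
    z 0 = 0 := by
  set δ : ℝ := 1 / (2 * (K + 1)) with hδdef
  have hKpos : (0:ℝ) < K + 1 := by linarith
  have hδpos : 0 < δ := by positivity
  have hKδ : K * δ ≤ 1 / 2 := by
    rw [hδdef, mul_one_div, div_le_div_iff₀ (by positivity) (by norm_num)]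
    nlinarith
  have key : ∀ n : ℕ, ∀ t ∈ Icc (0:ℝ) T, T - n * δ ≤ t → z t = 0 := by
    intro n
    induction n with
    | zero =>
      intro t ht hle
      simp only [Nat.cast_zero, zero_mul, sub_zero] at hle
      have htT : t = T := le_antisymm ht.2 hle
      subst htT
      have h1 := hineq t ht
      rw [intervalIntegral.integral_same] at h1
      exact le_antisymm h1 (hnn t ht)
    | succ n ih =>
      intro t ht hle
      set a : ℝ := max 0 (T - (n + 1 : ℕ) * δ) with ha_def
      have haT : a ≤ T := by
        apply max_le hT
        have : (0:ℝ) ≤ (n+1:ℕ) * δ := by positivity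
        linarith
      obtain ⟨t1, ht1mem, ht1max⟩ :=
        (isCompact_Icc : IsCompact (Icc a T)).exists_isMaxOn ⟨a, le_refl a, haT⟩
          hz.continuousOn
      have ht1Icc : t1 ∈ Icc (0:ℝ) T := ⟨le_trans (le_max_left 0 _) ht1mem.1, ht1mem.2⟩
      set m : ℝ := z t1 with hm_def
      have hm0 : 0 ≤ m := hnn t1 ht1Icc
      set b : ℝ := max t1 (T - n * δ) with hb_def
      have hbT : b ≤ T := by
        apply max_le ht1mem.2
        have : (0:ℝ) ≤ (n:ℕ) * δ := by positivity
        linarith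
      have ht1b : t1 ≤ b := le_max_left _ _
      have hint1 : IntervalIntegrable (fun u => K * z u) volume t1 b :=
        (hz.const_smul K).intervalIntegrable t1 b
      have hint2 : IntervalIntegrable (fun u => K * z u) volume b T :=
        (hz.const_smul K).intervalIntegrable b T
      have hsplit : (∫ u in t1..T, K * z u)
          = (∫ u in t1..b, K * z u) + ∫ u in b..T, K * z u :=
        (intervalIntegral.integral_add_adjacent_intervals hint1 hint2).symm
      have hzero : (∫ u in b..T, K * z u) = 0 := by
        have : EqOn (fun u => K * z u) (fun _ => (0:ℝ)) (Set.uIcc b T) := by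
          intro u hu
          rw [Set.uIcc_of_le hbT] at hu
          have hu0 : 0 ≤ u := le_trans (le_trans ht1Icc.1 ht1b) hu.1
          have : z u = 0 := ih u ⟨hu0, hu.2⟩ (le_trans (le_max_right t1 _) hu.1)
          simp [this]
        rw [intervalIntegral.integral_congr this]
        simp
      have hfirst : (∫ u in t1..b, K * z u) ≤ (b - t1) * (K * m) := by
        have hmono : ∀ u ∈ Icc t1 b, K * z u ≤ K * m := by
          intro u hu
          have huA : u ∈ Icc a T := ⟨le_trans ht1mem.1 hu.1, le_trans hu.2 hbT⟩
          exact mul_le_mul_of_nonneg_left (ht1max huA) hK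
        calc (∫ u in t1..b, K * z u) ≤ ∫ _u in t1..b, K * m := by
              apply intervalIntegral.integral_mono_on ht1b hint1
                (intervalIntegrable_const) hmono
          _ = (b - t1) * (K * m) := by
              rw [intervalIntegral.integral_const]; simp [smul_eq_mul]
      have hbt1 : b - t1 ≤ δ := by
        have h1 : T - (n+1:ℕ) * δ ≤ t1 := le_trans (le_max_right _ _) ht1mem.1
        have : b ≤ t1 + δ := by
          apply max_le (by linarith)
          push_cast at h1 ⊢
          linarith
        linarith
      have hmle : m ≤ (1/2) * m := by
        have h1 := hineq t1 ht1Icc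
        rw [hsplit, hzero, add_zero] at h1
        have h2 : (b - t1) * (K * m) ≤ δ * (K * m) :=
          mul_le_mul_of_nonneg_right hbt1 (by positivity)
        have h3 : δ * (K * m) ≤ (1/2) * m := by
          have : δ * (K * m) = (K * δ) * m := by ring
          rw [this]
          exact mul_le_mul_of_nonneg_right hKδ hm0
        linarith
      have hm_zero : m = 0 := by linarith
      have htA : t ∈ Icc a T := by
        exact ⟨max_le ht.1 hle, ht.2⟩
      exact le_antisymm (hm_zero ▸ ht1max htA) (hnn t ht)
  obtain ⟨n, hn⟩ := exists_nat_ge (T / δ)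
  apply key n 0 ⟨le_refl 0, hT⟩
  have : T ≤ n * δ := by
    rw [div_le_iff₀ hδpos] at hn
    linarith
  linarith

theorem distributed_delay_extinction
    (f : ℝ → ℝ) (L : ℝ) (hL : 0 ≤ L)
    (h r : ℝ → ℝ) (μ : ℝ → Measure ℝ) (φ : ℝ → ℝ)
    (hf_cont : Continuous f)
    (hf_nonneg : ∀ y : ℝ, 0 ≤ y → 0 ≤ f y)
    (hf_lip : ∀ u v : ℝ, 0 ≤ u → 0 ≤ v → |f u - f v| ≤ L * |u - v|)
    (hf_zero : f 0 = 0)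
    (hf_below : ∀ y : ℝ, 0 < y → f y < y)
    (hh_meas : Measurable h)
    (hh_le : ∀ t : ℝ, 0 ≤ t → h t ≤ t)
    (hh_tend : Tendsto h atTop atTop)
    (hr_meas : Measurable r)
    (hr_nonneg : ∀ t : ℝ, 0 ≤ r t)
    (hr_bdd : ∃ C : ℝ, ∀ᵐ t ∂volume, r t ≤ C)
    (hr_div : ¬ IntegrableOn r (Ici (0 : ℝ)))
    (hμ_prob : ∀ t : ℝ, 0 ≤ t → IsProbabilityMeasure (μ t))
    (hμ_supp : ∀ t : ℝ, 0 ≤ t → μ t (Icc (h t) t)ᶜ = 0)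
    (hμ_meas : ∀ g : ℝ → ℝ, Measurable g → (∃ C : ℝ, ∀ y : ℝ, |g y| ≤ C) →
      Measurable (fun t => ∫ s, g s ∂(μ t)))
    (hφ_cont : ContinuousOn φ (Iic (0 : ℝ)))
    (hφ_bdd : ∃ C : ℝ, ∀ t : ℝ, t ≤ 0 → |φ t| ≤ C)
    (hφ_nonneg : ∀ t : ℝ, t ≤ 0 → 0 ≤ φ t)
    (hφ_pos : 0 < φ 0)
    (x : ℝ → ℝ)
    (hx_cont : Continuous x)
    (hx_init : ∀ t : ℝ, t ≤ 0 → x t = φ t)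
    (hx_sol : ∀ t : ℝ, 0 ≤ t →
      x t = φ 0 + ∫ u in (0:ℝ)..t, r u * ((∫ s, f (x s) ∂(μ u)) - x u))
    :
    Tendsto x atTop (nhds 0) := by
  obtain ⟨C0, hC0⟩ := hφ_bdd
  have hC0nn : 0 ≤ C0 := le_trans (abs_nonneg _) (hC0 0 le_rfl)
  obtain ⟨Cr0, hCr0⟩ := hr_bdd
  set Cr : ℝ := max Cr0 0 with hCr_def
  have hCrnn : 0 ≤ Cr := le_max_right _ _
  have hCr : ∀ᵐ u ∂(volume : Measure ℝ), r u ≤ Cr := by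
    filter_upwards [hCr0] with u hu; exact le_trans hu (le_max_left _ _)
  set F : ℝ → ℝ := fun u => ∫ s, f (x s) ∂(μ u) with hF_def
  set g : ℝ → ℝ := fun u => r u * (F u - x u) with hg_def
  have hx0 : x 0 = φ 0 := by
    have := hx_sol 0 le_rfl; simpa using this
  have hxinitnn : ∀ t : ℝ, t ≤ 0 → 0 ≤ x t := fun t ht => by
    rw [hx_init t ht]; exact hφ_nonneg t ht
  have hfy : ∀ y : ℝ, 0 ≤ y → f y ≤ y := by
    intro y hy
    rcases eq_or_lt_of_le hy with hy' | hy'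
    · rw [← hy', hf_zero]
    · exact le_of_lt (hf_below y hy')
  have hsupp_ae : ∀ u : ℝ, 0 ≤ u → ∀ᵐ s ∂(μ u), s ∈ Icc (h u) u := by
    intro u hu
    exact ae_iff.mpr (hμ_supp u hu)
  -- uniform bounds on x and f ∘ x on (-∞, T]
  have hbd : ∀ T : ℝ, ∃ X : ℝ, 0 ≤ X ∧ (∀ s ≤ T, |x s| ≤ X) ∧ (∀ s ≤ T, |f (x s)| ≤ X) := by
    intro T
    obtain ⟨B1, hB1⟩ := (isCompact_Icc : IsCompact (Icc (0:ℝ) (max T 0))).exists_bound_of_continuousOn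
      hx_cont.continuousOn
    set X1 : ℝ := max C0 B1 with hX1_def
    have hX1 : ∀ s ≤ T, |x s| ≤ X1 := by
      intro s hs
      rcases le_or_gt s 0 with hs0 | hs0
      · rw [hx_init s hs0]
        exact le_trans (hC0 s hs0) (le_max_left _ _)
      · have : s ∈ Icc (0:ℝ) (max T 0) := ⟨le_of_lt hs0, le_trans hs (le_max_left _ _)⟩
        exact le_trans (le_of_eq (Real.norm_eq_abs (x s)).symm) (le_trans (hB1 s this) (le_max_right _ _))
    have hX1nn : 0 ≤ X1 := le_trans hC0nn (le_max_left _ _)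
    obtain ⟨B2, hB2⟩ := (isCompact_Icc : IsCompact (Icc (-X1) X1)).exists_bound_of_continuousOn
      hf_cont.continuousOn
    refine ⟨max X1 (max B2 0), le_trans hX1nn (le_max_left _ _), fun s hs => ?_, fun s hs => ?_⟩
    · exact le_trans (hX1 s hs) (le_max_left _ _)
    · have hmem : x s ∈ Icc (-X1) X1 := abs_le.mp (hX1 s hs)
      calc |f (x s)| = ‖f (x s)‖ := (Real.norm_eq_abs _).symm
        _ ≤ B2 := hB2 (x s) hmem
        _ ≤ max X1 (max B2 0) := le_trans (le_max_left _ _) (le_max_right _ _)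
  have hFint : ∀ u : ℝ, 0 ≤ u → Integrable (fun s => f (x s)) (μ u) := by
    intro u hu
    haveI := hμ_prob u hu
    obtain ⟨X, hXnn, hX1, hX2⟩ := hbd u
    refine Integrable.mono' (integrable_const X)
      ((hf_cont.comp hx_cont).aestronglyMeasurable) ?_
    filter_upwards [hsupp_ae u hu] with s hs
    rw [Real.norm_eq_abs]
    exact hX2 s hs.2
  have hFle : ∀ u c : ℝ, 0 ≤ u → (∀ s ∈ Icc (h u) u, f (x s) ≤ c) → F u ≤ c := by
    intro u c hu hc
    haveI := hμ_prob u hu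
    have h1 : F u ≤ ∫ _s, c ∂(μ u) := by
      refine integral_mono_ae (hFint u hu) (integrable_const c) ?_
      filter_upwards [hsupp_ae u hu] with s hs
      exact hc s hs
    simpa using h1
  have hFge0 : ∀ u : ℝ, 0 ≤ u → (∀ s ∈ Icc (h u) u, 0 ≤ f (x s)) → 0 ≤ F u := by
    intro u hu hc
    refine integral_nonneg_of_ae ?_
    filter_upwards [hsupp_ae u hu] with s hs
    exact hc s hs
  have hFbddT : ∀ T : ℝ, 0 ≤ T → ∃ X : ℝ, 0 ≤ X ∧ ∀ u ∈ Icc (0:ℝ) T, |F u| ≤ X := by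
    intro T hT
    obtain ⟨X, hXnn, hX1, hX2⟩ := hbd T
    refine ⟨X, hXnn, fun u hu => ?_⟩
    haveI := hμ_prob u hu.1
    have h1 : ‖∫ s, f (x s) ∂(μ u)‖ ≤ X * ((μ u) univ).toReal := by
      refine norm_integral_le_of_norm_le_const ?_
      filter_upwards [hsupp_ae u hu.1] with s hs
      rw [Real.norm_eq_abs]
      exact hX2 s (le_trans hs.2 hu.2)
    rw [Real.norm_eq_abs] at h1
    simpa using h1
  have hGmeas : ∀ T : ℝ, 0 ≤ T → ∃ G : ℝ → ℝ, Measurable G ∧ ∀ u ∈ Icc (0:ℝ) T, F u = G u := by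
    intro T hT
    obtain ⟨X, hXnn, hX1, hX2⟩ := hbd T
    set fT : ℝ → ℝ := fun s => f (x (min s T)) with hfT_def
    have hfTm : Measurable fT :=
      (hf_cont.comp (hx_cont.comp (continuous_id.min continuous_const))).measurable
    have hfTb : ∃ C : ℝ, ∀ y : ℝ, |fT y| ≤ C := ⟨X, fun y => hX2 _ (min_le_right y T)⟩
    refine ⟨fun u => ∫ s, fT s ∂(μ u), hμ_meas fT hfTm hfTb, fun u hu => ?_⟩
    refine integral_congr_ae ?_
    filter_upwards [hsupp_ae u hu.1] with s hs
    have : min s T = s := min_eq_left (le_trans hs.2 hu.2)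
    simp only [hfT_def, this]
  have hrInt : ∀ a b : ℝ, IntervalIntegrable r volume a b := by
    intro a b
    rw [intervalIntegrable_iff]
    refine Integrable.mono'
      ((integrableOn_const_iff (C := Cr)).mpr (Or.inr measure_Ioc_lt_top) :
        IntegrableOn (fun _ => Cr) (Set.uIoc a b) volume)
      hr_meas.aestronglyMeasurable.restrict ?_
    filter_upwards [ae_restrict_of_ae hCr] with u hu
    rw [Real.norm_eq_abs, abs_of_nonneg (hr_nonneg u)]
    exact hu
  have hgInt : ∀ a b : ℝ, 0 ≤ a → a ≤ b → IntervalIntegrable g volume a b := by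
    intro a b ha hab
    have hb : 0 ≤ b := le_trans ha hab
    obtain ⟨G, hGm, hGeq⟩ := hGmeas b hb
    obtain ⟨XF, hXFnn, hXF⟩ := hFbddT b hb
    obtain ⟨Xx, hXxnn, hXx, _⟩ := hbd b
    rw [intervalIntegrable_iff, uIoc_of_le hab]
    have hmeas : AEStronglyMeasurable g (volume.restrict (Ioc a b)) := by
      refine AEStronglyMeasurable.congr
        ((hr_meas.mul (hGm.sub hx_cont.measurable)).aestronglyMeasurable.restrict) ?_
      rw [Filter.EventuallyEq]
      rw [ae_restrict_iff' measurableSet_Ioc]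
      refine ae_of_all _ fun u hu => ?_
      have : F u = G u := hGeq u ⟨le_trans ha (le_of_lt hu.1), hu.2⟩
      simp only [hg_def, this, Pi.mul_apply, Pi.sub_apply]
    refine Integrable.mono'
      ((integrableOn_const_iff (C := Cr * (XF + Xx))).mpr (Or.inr measure_Ioc_lt_top) :
        IntegrableOn (fun _ => Cr * (XF + Xx)) (Ioc a b) volume) hmeas ?_
    filter_upwards [ae_restrict_of_ae hCr, ae_restrict_mem measurableSet_Ioc] with u h1 h2
    simp only [Real.norm_eq_abs, hg_def]
    have huIcc : u ∈ Icc (0:ℝ) b := ⟨le_trans ha (le_of_lt h2.1), h2.2⟩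
    calc |r u * (F u - x u)| = r u * |F u - x u| := by
          rw [abs_mul, abs_of_nonneg (hr_nonneg u)]
      _ ≤ Cr * (XF + Xx) := by
          refine mul_le_mul h1 ?_ (abs_nonneg _) hCrnn
          calc |F u - x u| ≤ |F u| + |x u| := abs_sub _ _
            _ ≤ XF + Xx := add_le_add (hXF u huIcc) (hXx u h2.2)
  have hdiff : ∀ a b : ℝ, 0 ≤ a → a ≤ b → x b - x a = ∫ u in a..b, g u := by
    intro a b ha hab
    have hb : 0 ≤ b := le_trans ha hab
    have hadd := intervalIntegral.integral_add_adjacent_intervals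
      (hgInt 0 a le_rfl ha) (hgInt a b ha hab)
    have hxa := hx_sol a ha
    have hxb := hx_sol b hb
    rw [hxa, hxb]
    have hadd' : (∫ u in (0:ℝ)..a, g u) + ∫ u in a..b, g u = ∫ u in (0:ℝ)..b, g u := hadd
    linarith
  -- positivity
  have hpos : ∀ t : ℝ, 0 ≤ t → 0 < x t := by
    by_contra hcon
    push_neg at hcon
    obtain ⟨t0, ht0, hxt0⟩ := hcon
    set Sz : Set ℝ := Ici (0:ℝ) ∩ {t | x t ≤ 0} with hSz_def
    have hSz_closed : IsClosed Sz :=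
      isClosed_Ici.inter (isClosed_le hx_cont continuous_const)
    have hSz_ne : Sz.Nonempty := ⟨t0, ht0, hxt0⟩
    have hSz_bdd : BddBelow Sz := ⟨0, fun s hs => hs.1⟩
    set T0 : ℝ := sInf Sz with hT0_def
    have hT0mem : T0 ∈ Sz := hSz_closed.csInf_mem hSz_ne hSz_bdd
    have hT0nn : 0 ≤ T0 := hT0mem.1
    have hlt : ∀ s, 0 ≤ s → s < T0 → 0 < x s := by
      intro s hs hsT
      by_contra hxs
      push_neg at hxs
      exact absurd (csInf_le hSz_bdd ⟨hs, hxs⟩) (not_le.mpr hsT)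
    have hT0pos : 0 < T0 := by
      rcases eq_or_lt_of_le hT0nn with he | hlt'
      · exfalso
        have : x T0 ≤ 0 := hT0mem.2
        rw [← he] at this
        rw [hx0] at this
        linarith
      · exact hlt'
    have hxT0 : x T0 = 0 := by
      refine le_antisymm (hT0mem.2 : x T0 ≤ 0) ?_
      have htend : Tendsto x (nhdsWithin T0 (Iio T0)) (nhds (x T0)) :=
        hx_cont.continuousAt.tendsto.mono_left nhdsWithin_le_nhds
      have hne : (nhdsWithin T0 (Iio T0)).NeBot := nhdsLT_neBot T0
      refine ge_of_tendsto htend ?_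
      have hIoi : Ioi (0:ℝ) ∈ nhds T0 := Ioi_mem_nhds hT0pos
      filter_upwards [self_mem_nhdsWithin, mem_nhdsWithin_of_mem_nhds hIoi] with s hs1 hs2
      exact le_of_lt (hlt s (le_of_lt hs2) hs1)
    have hnnT0 : ∀ s ≤ T0, 0 ≤ x s := by
      intro s hs
      rcases le_or_gt s 0 with hs0 | hs0
      · exact hxinitnn s hs0
      · rcases eq_or_lt_of_le hs with he | hlt'
        · rw [he, hxT0]
        · exact le_of_lt (hlt s (le_of_lt hs0) hlt')
    have hFnn : ∀ u ∈ Icc (0:ℝ) T0, 0 ≤ F u := by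
      intro u hu
      refine hFge0 u hu.1 fun s hs => ?_
      exact hf_nonneg _ (hnnT0 s (le_trans hs.2 hu.2))
    have hineq : ∀ t ∈ Icc (0:ℝ) T0, x t ≤ ∫ u in t..T0, Cr * x u := by
      intro t ht
      have hxt : x t = ∫ u in t..T0, -g u := by
        have := hdiff t T0 ht.1 ht.2
        rw [intervalIntegral.integral_neg]
        rw [hxT0] at this
        linarith
      rw [hxt]
      refine intervalIntegral.integral_mono_ae_restrict ht.2
        ((hgInt t T0 ht.1 ht.2).neg) ((hx_cont.const_smul Cr).intervalIntegrable t T0) ?_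
      filter_upwards [ae_restrict_of_ae hCr, ae_restrict_mem measurableSet_Icc] with u h1 h2
      have huIcc : u ∈ Icc (0:ℝ) T0 := ⟨le_trans ht.1 h2.1, h2.2⟩
      have h3 : -g u = r u * (x u - F u) := by simp only [hg_def]; ring
      rw [h3]
      calc r u * (x u - F u) ≤ r u * x u := by
            refine mul_le_mul_of_nonneg_left ?_ (hr_nonneg u)
            linarith [hFnn u huIcc]
        _ ≤ Cr * x u := mul_le_mul_of_nonneg_right h1 (hnnT0 u h2.2)
    have hzero := gronwall_aux x Cr T0 hCrnn hT0nn hx_cont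
      (fun t ht => hnnT0 t ht.2) hineq
    rw [hx0] at hzero
    linarith
  have hxnn : ∀ t : ℝ, 0 ≤ x t := by
    intro t
    rcases le_or_gt t 0 with ht | ht
    · exact hxinitnn t ht
    · exact le_of_lt (hpos t (le_of_lt ht))
  -- upper bound
  have hub : ∀ t : ℝ, x t ≤ C0 := by
    have key : ∀ ε : ℝ, 0 < ε → ∀ t : ℝ, x t ≤ C0 + ε := by
      intro ε hε
      by_contra hcon
      push_neg at hcon
      obtain ⟨t0, hxt0⟩ := hcon
      have hxle : ∀ t ≤ (0:ℝ), x t ≤ C0 := by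
        intro t ht
        rw [hx_init t ht]
        exact le_trans (le_abs_self _) (hC0 t ht)
      have ht0pos : 0 < t0 := by
        by_contra hcon2
        push_neg at hcon2
        have := hxle t0 hcon2
        linarith
      set Sz : Set ℝ := Ici (0:ℝ) ∩ {t | C0 + ε ≤ x t} with hSz_def
      have hSz_closed : IsClosed Sz :=
        isClosed_Ici.inter (isClosed_le continuous_const hx_cont)
      have hSz_ne : Sz.Nonempty := ⟨t0, le_of_lt ht0pos, le_of_lt hxt0⟩
      have hSz_bdd : BddBelow Sz := ⟨0, fun s hs => hs.1⟩
      set T1 : ℝ := sInf Sz with hT1_def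
      have hT1mem : T1 ∈ Sz := hSz_closed.csInf_mem hSz_ne hSz_bdd
      have hT1nn : 0 ≤ T1 := hT1mem.1
      have hlt : ∀ s, 0 ≤ s → s < T1 → x s < C0 + ε := by
        intro s hs hsT
        by_contra hxs
        push_neg at hxs
        exact absurd (csInf_le hSz_bdd ⟨hs, hxs⟩) (not_le.mpr hsT)
      have hT1pos : 0 < T1 := by
        rcases eq_or_lt_of_le hT1nn with he | hlt'
        · exfalso
          have : C0 + ε ≤ x T1 := hT1mem.2
          rw [← he, hx0] at this
          have h2 := le_trans (le_abs_self _) (hC0 0 le_rfl)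
          linarith
        · exact hlt'
      have hxT1 : x T1 = C0 + ε := by
        refine le_antisymm ?_ (hT1mem.2 : C0 + ε ≤ x T1)
        have htend : Tendsto x (nhdsWithin T1 (Iio T1)) (nhds (x T1)) :=
          hx_cont.continuousAt.tendsto.mono_left nhdsWithin_le_nhds
        have hne : (nhdsWithin T1 (Iio T1)).NeBot := nhdsLT_neBot T1
        refine le_of_tendsto htend ?_
        have hIoi : Ioi (0:ℝ) ∈ nhds T1 := Ioi_mem_nhds hT1pos
        filter_upwards [self_mem_nhdsWithin, mem_nhdsWithin_of_mem_nhds hIoi] with s hs1 hs2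
        exact le_of_lt (hlt s (le_of_lt hs2) hs1)
      have hleT1 : ∀ s ≤ T1, x s ≤ C0 + ε := by
        intro s hs
        rcases le_or_gt s 0 with hs0 | hs0
        · have := hxle s hs0; linarith
        · rcases eq_or_lt_of_le hs with he | hlt'
          · rw [he, hxT1]
          · exact le_of_lt (hlt s (le_of_lt hs0) hlt')
      have hnnT1 : ∀ s ≤ T1, 0 ≤ x s := by
        intro s hs
        rcases le_or_gt s 0 with hs0 | hs0
        · exact hxinitnn s hs0
        · exact le_of_lt (hpos s (le_of_lt hs0))
      have hFleT1 : ∀ u ∈ Icc (0:ℝ) T1, F u ≤ C0 + ε := by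
        intro u hu
        refine hFle u (C0 + ε) hu.1 fun s hs => ?_
        have hsle : s ≤ T1 := le_trans hs.2 hu.2
        exact le_trans (hfy _ (hnnT1 s hsle)) (hleT1 s hsle)
      set z : ℝ → ℝ := fun t => C0 + ε - x t with hz_def
      have hineq : ∀ t ∈ Icc (0:ℝ) T1, z t ≤ ∫ u in t..T1, Cr * z u := by
        intro t ht
        have hzt : z t = ∫ u in t..T1, g u := by
          have := hdiff t T1 ht.1 ht.2
          simp only [hz_def]
          rw [hxT1] at this
          linarith
        rw [hzt]
        refine intervalIntegral.integral_mono_ae_restrict ht.2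
          (hgInt t T1 ht.1 ht.2)
          ((continuous_const.mul (continuous_const.sub hx_cont)).intervalIntegrable t T1) ?_
        filter_upwards [ae_restrict_of_ae hCr, ae_restrict_mem measurableSet_Icc] with u h1 h2
        have huIcc : u ∈ Icc (0:ℝ) T1 := ⟨le_trans ht.1 h2.1, h2.2⟩
        have hzu : (0:ℝ) ≤ C0 + ε - x u := by linarith [hleT1 u h2.2]
        show g u ≤ Cr * (C0 + ε - x u)
        have hgu : g u = r u * (F u - x u) := rfl
        rw [hgu]
        calc r u * (F u - x u) ≤ r u * (C0 + ε - x u) :=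
              mul_le_mul_of_nonneg_left (by linarith [hFleT1 u huIcc]) (hr_nonneg u)
          _ ≤ Cr * (C0 + ε - x u) := mul_le_mul_of_nonneg_right h1 hzu
      have hzero := gronwall_aux z Cr T1 hCrnn hT1nn
        (continuous_const.sub hx_cont)
        (fun t ht => by simp only [hz_def]; linarith [hleT1 t ht.2]) hineq
      simp only [hz_def] at hzero
      rw [hx0] at hzero
      have h2 := le_trans (le_abs_self _) (hC0 0 le_rfl)
      linarith
    intro t
    refine le_of_forall_pos_le_add fun ε hε => key ε hε t
  -- divergence of the integral of r
  have hRdiv : ∀ A T2 : ℝ, 0 ≤ T2 → ∃ t, T2 ≤ t ∧ A ≤ ∫ u in T2..t, r u := by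
    intro A T2 hT2
    by_contra hcon
    push_neg at hcon
    have hInt : IntegrableOn r (Ioi T2) volume := by
      refine integrableOn_Ioi_of_intervalIntegral_norm_bounded
        (l := (atTop : Filter ℕ)) (b := fun n : ℕ => T2 + n)
        A T2 (fun n => ?_) ?_ ?_
      · exact (hrInt T2 (T2 + n)).1
      · exact tendsto_atTop_add_const_left atTop T2 tendsto_natCast_atTop_atTop
      · refine Eventually.of_forall fun n => ?_
        have heq : (∫ u in T2..(T2 + (n:ℝ)), ‖r u‖) = ∫ u in T2..(T2 + (n:ℝ)), r u := by
          refine intervalIntegral.integral_congr fun u _ => ?_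
          rw [Real.norm_eq_abs, abs_of_nonneg (hr_nonneg u)]
        rw [heq]
        exact le_of_lt (hcon (T2 + n) (le_add_of_nonneg_right (Nat.cast_nonneg n)))
    apply hr_div
    have h1 : IntegrableOn r (Icc 0 T2) volume :=
      (intervalIntegrable_iff_integrableOn_Icc_of_le hT2).mp (hrInt 0 T2)
    refine (h1.union hInt).mono_set fun t ht => ?_
    rcases le_or_gt t T2 with h | h
    · exact Or.inl ⟨ht, h⟩
    · exact Or.inr h
  -- limsup machinery
  have hba : IsBoundedUnder (· ≤ ·) atTop x := isBoundedUnder_of ⟨C0, fun t => hub t⟩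
  have hbb : IsBoundedUnder (· ≥ ·) atTop x := isBoundedUnder_of ⟨0, fun t => hxnn t⟩
  have hcb : IsCoboundedUnder (· ≤ ·) atTop x := hbb.isCoboundedUnder_le
  set S : ℝ := limsup x atTop with hS_def
  have hS0 : S ≤ 0 := by
    by_contra hcon
    push_neg at hcon
    obtain ⟨y0, hy0mem, hy0max⟩ :=
      (isCompact_Icc : IsCompact (Icc (0:ℝ) S)).exists_isMaxOn
        (nonempty_Icc.mpr (le_of_lt hcon)) hf_cont.continuousOn
    set K0 : ℝ := f y0 with hK0_def
    have hK0nn : 0 ≤ K0 := hf_nonneg y0 hy0mem.1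
    have hK0lt : K0 < S := by
      rcases eq_or_lt_of_le hy0mem.1 with he | hlt'
      · rw [hK0_def, ← he, hf_zero]; exact hcon
      · exact lt_of_lt_of_le (hf_below y0 hlt') hy0mem.2
    have hL2 : (0:ℝ) < L + 2 := by linarith
    set ε : ℝ := (S - K0) / (L + 2) with hε_def
    have hεpos : 0 < ε := div_pos (by linarith) hL2
    have hεmul : ε * (L + 2) = S - K0 := div_mul_cancel₀ _ (ne_of_gt hL2)
    set c : ℝ := K0 + L * ε with hc_def
    have hcε : c + ε < S := by
      have : c + ε = K0 + (L + 1) * ε := by rw [hc_def]; ring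
      rw [this]
      nlinarith [hεpos, hεmul]
    have hcnn : 0 ≤ c := add_nonneg hK0nn (mul_nonneg hL hεpos.le)
    have hfc : ∀ y : ℝ, 0 ≤ y → y ≤ S + ε → f y ≤ c := by
      intro y hy hyS
      rcases le_or_gt y S with h1 | h1
      · have h2 : f y ≤ K0 := hy0max ⟨hy, h1⟩
        have h3 : (0:ℝ) ≤ L * ε := mul_nonneg hL hεpos.le
        rw [hc_def]; linarith
      · have h2 : |f y - f S| ≤ L * |y - S| := hf_lip y S hy (le_of_lt hcon)
        have h3 : f S ≤ K0 := hy0max ⟨le_of_lt hcon, le_rfl⟩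
        have h4 : |y - S| ≤ ε := by
          rw [abs_of_nonneg (by linarith)]; linarith
        have h5 : f y - f S ≤ |f y - f S| := le_abs_self _
        have h6 : L * |y - S| ≤ L * ε := mul_le_mul_of_nonneg_left h4 hL
        rw [hc_def]; linarith
    have hev : ∀ᶠ t in atTop, x t < S + ε :=
      eventually_lt_of_limsup_lt (by rw [← hS_def]; linarith) hba
    obtain ⟨Tε0, hTε0⟩ := eventually_atTop.mp hev
    set Tε : ℝ := max Tε0 0 with hTε_def
    have hTεnn : 0 ≤ Tε := le_max_right _ _
    have hTεbd : ∀ s, Tε ≤ s → x s < S + ε := fun s hs =>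
      hTε0 s (le_trans (le_max_left _ _) hs)
    obtain ⟨T20, hT20⟩ := eventually_atTop.mp (hh_tend.eventually_ge_atTop Tε)
    set T2 : ℝ := max T20 0 with hT2_def
    have hT2nn : 0 ≤ T2 := le_max_right _ _
    have hFc : ∀ u, T2 ≤ u → F u ≤ c := by
      intro u hu
      have hu0 : 0 ≤ u := le_trans hT2nn hu
      refine hFle u c hu0 fun s hs => ?_
      have hsTε : Tε ≤ s := le_trans (hT20 u (le_trans (le_max_left _ _) hu)) hs.1
      exact hfc (x s) (hxnn s) (le_of_lt (hTεbd s hsTε))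
    have hT3 : ∃ T3, T2 ≤ T3 ∧ x T3 ≤ c + ε := by
      by_contra hcon2
      push_neg at hcon2
      obtain ⟨t, ht, hint⟩ := hRdiv (x T2 / ε) T2 hT2nn
      have hmono : (∫ u in T2..t, g u) ≤ ∫ u in T2..t, (-ε) * r u := by
        refine intervalIntegral.integral_mono_on ht (hgInt T2 t hT2nn ht)
          ((hrInt T2 t).const_mul (-ε)) fun u hu => ?_
        have hFu : F u ≤ c := hFc u hu.1
        have hxu : c + ε < x u := hcon2 u hu.1
        have hgu : g u = r u * (F u - x u) := rfl
        rw [hgu]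
        calc r u * (F u - x u) ≤ r u * (-ε) :=
              mul_le_mul_of_nonneg_left (by linarith) (hr_nonneg u)
          _ = -ε * r u := by ring
      have hc1 : (∫ u in T2..t, (-ε) * r u) = -ε * ∫ u in T2..t, r u :=
        intervalIntegral.integral_const_mul _ _
      have hc2 : -ε * (∫ u in T2..t, r u) ≤ -ε * (x T2 / ε) :=
        mul_le_mul_of_nonpos_left hint (by linarith)
      have hc3 : -ε * (x T2 / ε) = -x T2 := by
        have hε0 : ε ≠ 0 := ne_of_gt hεpos
        field_simp
      have hd := hdiff T2 t hT2nn ht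
      have hxt := hpos t (le_trans hT2nn ht)
      linarith
    obtain ⟨T3, hT23, hxT3⟩ := hT3
    have hclaim : ∀ t, T3 ≤ t → x t ≤ c + ε := by
      intro t4 ht4
      by_contra hcon3
      push_neg at hcon3
      set Sz : Set ℝ := Icc T3 t4 ∩ {t | x t ≤ c + ε} with hSz
      have hclosed : IsClosed Sz := isClosed_Icc.inter (isClosed_le hx_cont continuous_const)
      have hne : Sz.Nonempty := ⟨T3, ⟨le_rfl, ht4⟩, hxT3⟩
      have hbddA : BddAbove Sz := ⟨t4, fun s hs => hs.1.2⟩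
      set T4 : ℝ := sSup Sz with hT4_def
      have hT4mem : T4 ∈ Sz := hclosed.csSup_mem hne hbddA
      have hT4le : x T4 ≤ c + ε := hT4mem.2
      have hT4t4 : T4 ≤ t4 := hT4mem.1.2
      have hT4lt : T4 < t4 :=
        lt_of_le_of_ne hT4t4 (fun he => by rw [he] at hT4le; linarith)
      have hupp : ∀ u, T4 < u → u ≤ t4 → c + ε < x u := by
        intro u hu1 hu2
        by_contra hxu
        push_neg at hxu
        have hmem : u ∈ Sz := ⟨⟨le_trans hT4mem.1.1 (le_of_lt hu1), hu2⟩, hxu⟩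
        exact absurd (le_csSup hbddA hmem) (not_le.mpr hu1)
      have hT4nn : 0 ≤ T4 := le_trans (le_trans hT2nn hT23) hT4mem.1.1
      have hd := hdiff T4 t4 hT4nn (le_of_lt hT4lt)
      have hneg : (∫ u in T4..t4, g u) ≤ 0 := by
        rw [intervalIntegral.integral_of_le (le_of_lt hT4lt)]
        refine integral_nonpos_of_ae ?_
        filter_upwards [ae_restrict_mem measurableSet_Ioc] with u hu
        have hxu : c + ε < x u := hupp u hu.1 hu.2
        have hFu : F u ≤ c := hFc u (le_trans hT23 (le_trans hT4mem.1.1 (le_of_lt hu.1)))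
        have hgu : g u = r u * (F u - x u) := rfl
        rw [hgu]
        exact mul_nonpos_iff.mpr (Or.inl ⟨hr_nonneg u, by linarith⟩)
      linarith
    have hfinal : S ≤ c + ε := by
      refine limsup_le_of_le hcb ?_
      exact eventually_atTop.mpr ⟨T3, hclaim⟩
    linarith
  rw [Metric.tendsto_atTop]
  intro ε hε
  have hev : ∀ᶠ t in atTop, x t < ε :=
    eventually_lt_of_limsup_lt (lt_of_le_of_lt hS0 hε) hba
  obtain ⟨N, hN⟩ := eventually_atTop.mp hev
  refine ⟨N, fun t ht => ?_⟩
  rw [Real.dist_eq, sub_zero, abs_of_nonneg (hxnn t)]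
  exact hN t ht
end

section
/- Suppose hypotheses (a1), (a2), (a4), (a5) hold, r > 0 is a positive constant, and sup_{t ≥ 0} (t − h(t)) < 1/(r·(L + 1)), where L is the Lipschitz constant of f from (a1). Then every solution x of the initial value problem for the equation x'(t) = r·(∫_ℝ f(x(s)) dμ_t(s) − x(t)) satisfies lim_{t→∞} x(t) = K. -/
open MeasureTheory Filter Set

section helpers
open intervalIntegral

lemma exp_hasDerivAt (r u : ℝ) : HasDerivAt (fun w => Real.exp (r * w)) (r * Real.exp (r * u)) u := by
  simpa [mul_comm] using ((hasDerivAt_id u).const_mul r).exp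

lemma integral_r_exp (r v b : ℝ) :
    ∫ u in v..b, r * Real.exp (r * u) = Real.exp (r * b) - Real.exp (r * v) := by
  rw [intervalIntegral.integral_eq_sub_of_hasDerivAt (fun u _ => exp_hasDerivAt r u)]
  exact (Continuous.intervalIntegrable (by continuity) _ _)

lemma key_identity (r a b : ℝ) (hr : 0 ≤ r) (hab : a ≤ b) (g : ℝ → ℝ)
    (hgm : Measurable g) (hgi : IntegrableOn g (Ioc a b)) :
    ∫ u in a..b, (r * Real.exp (r * u)) * (∫ v in a..u, g v) =
      ∫ v in a..b, (Real.exp (r * b) - Real.exp (r * v)) * g v := by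
  set μ := volume.restrict (Ioc a b) with hμ
  have hμfin : IsFiniteMeasure μ := by
    constructor
    rw [hμ, Measure.restrict_apply_univ]
    exact measure_Ioc_lt_top
  set F : ℝ → ℝ → ℝ := fun u v => (r * Real.exp (r * u)) * ((Ioc a u).indicator g v) with hF
  have hSmeas : MeasurableSet {p : ℝ × ℝ | p.2 ∈ Ioc a p.1} := by
    apply MeasurableSet.inter
    · exact measurableSet_lt measurable_const measurable_snd
    · exact measurableSet_le measurable_snd measurable_fst
  have hFmeas : Measurable (Function.uncurry F) := by
    have h1 : Function.uncurry F = fun p : ℝ × ℝ =>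
        (r * Real.exp (r * p.1)) * ({p : ℝ × ℝ | p.2 ∈ Ioc a p.1}.indicator (fun q => g q.2) p) := by
      funext p
      simp only [Function.uncurry, hF, Set.indicator, Set.mem_setOf_eq]
      by_cases hp : p.2 ∈ Ioc a p.1 <;> simp only [Set.mem_Ioc] at hp ⊢ <;> simp [hp]
    rw [h1]
    exact ((measurable_const.mul ((Real.measurable_exp).comp (measurable_const.mul measurable_fst)))).mul
      ((hgm.comp measurable_snd).indicator hSmeas)
  have hae : ∀ᵐ p ∂(μ.prod μ), p ∈ (Ioc a b) ×ˢ (Ioc a b) := by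
    rw [hμ, Measure.prod_restrict]
    exact ae_restrict_mem (measurableSet_Ioc.prod measurableSet_Ioc)
  have hint : Integrable (Function.uncurry F) (μ.prod μ) := by
    have hsnd : Integrable (fun p : ℝ × ℝ => g p.2) (μ.prod μ) := by
      have hmap : (μ.prod μ).map Prod.snd = μ Set.univ • μ := Measure.map_snd_prod
      have : Integrable g (μ Set.univ • μ) :=
        hgi.smul_measure (by exact (measure_lt_top μ _).ne)
      rw [← hmap] at this
      exact (integrable_map_measure (hgm.aestronglyMeasurable) measurable_snd.aemeasurable).mp this
    apply Integrable.mono' (hsnd.norm.const_mul (r * Real.exp (r * b)))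
      hFmeas.aestronglyMeasurable
    filter_upwards [hae] with p hp
    have hp1 : p.1 ∈ Ioc a b := hp.1
    have hbound : |(Ioc a p.1).indicator g p.2| ≤ |g p.2| := by
      by_cases hp2 : p.2 ∈ Ioc a p.1
      · rw [Set.indicator_of_mem hp2]
      · rw [Set.indicator_of_notMem hp2, abs_zero]; exact abs_nonneg _
    have he : Real.exp (r * p.1) ≤ Real.exp (r * b) :=
      Real.exp_le_exp.2 (mul_le_mul_of_nonneg_left hp1.2 hr)
    have h0 : (0:ℝ) ≤ r * Real.exp (r * p.1) := by positivity
    calc ‖Function.uncurry F p‖ = (r * Real.exp (r * p.1)) * |(Ioc a p.1).indicator g p.2| := by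
          show ‖(r * Real.exp (r * p.1)) * ((Ioc a p.1).indicator g p.2)‖ = _
          rw [Real.norm_eq_abs, abs_mul, abs_of_nonneg h0]
      _ ≤ (r * Real.exp (r * b)) * ‖g p.2‖ := by
          have h1 : r * Real.exp (r * p.1) ≤ r * Real.exp (r * b) := mul_le_mul_of_nonneg_left he hr
          have h2 : |(Ioc a p.1).indicator g p.2| ≤ ‖g p.2‖ := by simpa using hbound
          exact mul_le_mul h1 h2 (abs_nonneg _) (by positivity)
  -- step 2 : LHS as iterated integral
  have hLHS : ∫ u in a..b, (r * Real.exp (r * u)) * (∫ v in a..u, g v)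
      = ∫ u, (∫ v, F u v ∂μ) ∂μ := by
    rw [intervalIntegral.integral_of_le hab]
    apply setIntegral_congr_ae measurableSet_Ioc
    filter_upwards with u hu
    have : ∫ v, F u v ∂μ = (r * Real.exp (r * u)) * ∫ v, (Ioc a u).indicator g v ∂μ := by
      simp only [hF]
      exact MeasureTheory.integral_const_mul _ _
    rw [this]
    congr 1
    rw [MeasureTheory.integral_indicator measurableSet_Ioc, hμ, Measure.restrict_restrict measurableSet_Ioc,
      Set.inter_eq_left.2 (Ioc_subset_Ioc_right hu.2), intervalIntegral.integral_of_le hu.1.le]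
  -- step 3 : swap
  have hswap : ∫ u, (∫ v, F u v ∂μ) ∂μ = ∫ v, (∫ u, F u v ∂μ) ∂μ :=
    integral_integral_swap hint
  -- step 4 : inner integral
  have hRHS : ∫ v, (∫ u, F u v ∂μ) ∂μ = ∫ v in a..b, (Real.exp (r * b) - Real.exp (r * v)) * g v := by
    rw [intervalIntegral.integral_of_le hab]
    apply setIntegral_congr_ae measurableSet_Ioc
    filter_upwards with v hv
    have hfun : (fun u => F u v) = (Ici v).indicator (fun u => (r * Real.exp (r * u)) * g v) := by
      funext u
      simp only [hF, Set.indicator, Set.mem_Ioc, Set.mem_Ici]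
      by_cases hvu : v ≤ u
      · simp [hvu, hv.1]
      · simp [hvu]
    rw [hfun, MeasureTheory.integral_indicator measurableSet_Ici, hμ,
      Measure.restrict_restrict measurableSet_Ici]
    have hset : Ici v ∩ Ioc a b = Icc v b := by
      ext w
      simp only [Set.mem_inter_iff, Set.mem_Ici, Set.mem_Ioc, Set.mem_Icc]
      constructor
      · rintro ⟨h1, _, h3⟩; exact ⟨h1, h3⟩
      · rintro ⟨h1, h2⟩; exact ⟨h1, lt_of_lt_of_le hv.1 h1, h2⟩
    rw [hset]
    have : ∫ u in Icc v b, (r * Real.exp (r * u)) * g v = ∫ u in Ioc v b, (r * Real.exp (r * u)) * g v := by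
      rw [integral_Icc_eq_integral_Ioc]
    rw [this, ← intervalIntegral.integral_of_le hv.2, intervalIntegral.integral_mul_const,
      integral_r_exp]
  rw [hLHS, hswap, hRHS]

lemma cont_rexp (r : ℝ) : Continuous fun u : ℝ => Real.exp (r * u) :=
  Real.continuous_exp.comp (continuous_const.mul continuous_id)

lemma gronwall_lower (r ℓ a b : ℝ) (hr : 0 < r) (hab : a ≤ b) (X G : ℝ → ℝ)
    (hX : Continuous X) (hGm : Measurable G) (hGi : IntegrableOn G (Ioc a b))
    (hinc : ∀ t ∈ Icc a b, X t = X a + ∫ u in a..t, r * (G u - X u))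
    (hG : ∀ u ∈ Icc a b, ℓ ≤ G u) :
    X a * Real.exp (-(r * (b - a))) + ℓ * (1 - Real.exp (-(r * (b - a)))) ≤ X b := by
  set g : ℝ → ℝ := fun u => r * (G u - X u) with hg
  have hgm : Measurable g := (hGm.sub hX.measurable).const_mul r
  have hXi : IntegrableOn X (Ioc a b) := hX.integrableOn_Ioc
  have hgi : IntegrableOn g (Ioc a b) := ((hGi.sub hXi).const_mul r)
  have hgII : IntervalIntegrable g volume a b :=
    (intervalIntegrable_iff_integrableOn_Ioc_of_le hab).2 hgi
  have hGII : IntervalIntegrable G volume a b :=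
    (intervalIntegrable_iff_integrableOn_Ioc_of_le hab).2 hGi
  have hid := key_identity r a b hr.le hab g hgm hgi
  have hL : ∫ u in a..b, (r * Real.exp (r * u)) * (∫ v in a..u, g v)
      = ∫ u in a..b, ((r * Real.exp (r * u)) * X u - (r * Real.exp (r * u)) * X a) := by
    apply intervalIntegral.integral_congr
    intro u hu
    rw [uIcc_of_le hab] at hu
    simp only []
    rw [show (∫ v in a..u, g v) = X u - X a by rw [hinc u hu]; ring]
    ring
  have hcont1 : Continuous fun u => (r * Real.exp (r * u)) * X u :=
    (continuous_const.mul (cont_rexp r)).mul hX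
  have hcont2 : Continuous fun u => (r * Real.exp (r * u)) * X a :=
    (continuous_const.mul (cont_rexp r)).mul continuous_const
  have hL2 : ∫ u in a..b, ((r * Real.exp (r * u)) * X u - (r * Real.exp (r * u)) * X a)
      = (∫ u in a..b, (r * Real.exp (r * u)) * X u) - X a * (Real.exp (r * b) - Real.exp (r * a)) := by
    rw [intervalIntegral.integral_sub (hcont1.intervalIntegrable a b) (hcont2.intervalIntegrable a b)]
    congr 1
    rw [show (∫ u in a..b, (r * Real.exp (r * u)) * X a) = (∫ u in a..b, r * Real.exp (r * u)) * X a from intervalIntegral.integral_mul_const _ _, integral_r_exp]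
    ring
  have hgeII : IntervalIntegrable (fun v => Real.exp (r * v) * g v) volume a b := by
    simpa [mul_comm] using hgII.mul_continuousOn (g := fun v => Real.exp (r * v)) (cont_rexp r).continuousOn
  have hR : ∫ v in a..b, (Real.exp (r * b) - Real.exp (r * v)) * g v
      = Real.exp (r * b) * (X b - X a) - ∫ v in a..b, Real.exp (r * v) * g v := by
    have e1 : ∫ v in a..b, (Real.exp (r * b) - Real.exp (r * v)) * g v
        = ∫ v in a..b, (Real.exp (r * b) * g v - Real.exp (r * v) * g v) := by
      apply intervalIntegral.integral_congr; intro v _; ring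
    rw [e1, intervalIntegral.integral_sub (hgII.const_mul _) hgeII]
    congr 1
    rw [intervalIntegral.integral_const_mul]
    congr 1
    have := hinc b ⟨hab, le_rfl⟩
    rw [this]; ring
  -- main equation : ∫ (exp(rv) g v + r exp(rv) X v) = exp(rb) X b - exp(ra) X a
  have hXeII : IntervalIntegrable (fun v => r * Real.exp (r * v) * X v) volume a b :=
    (hcont1.intervalIntegrable a b)
  have hmain : ∫ v in a..b, (r * Real.exp (r * v)) * G v
      = Real.exp (r * b) * X b - Real.exp (r * a) * X a := by
    have e2 : ∫ v in a..b, (r * Real.exp (r * v)) * G v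
        = ∫ v in a..b, (Real.exp (r * v) * g v + r * Real.exp (r * v) * X v) := by
      apply intervalIntegral.integral_congr; intro v _; simp only [hg]; ring
    rw [e2, intervalIntegral.integral_add hgeII hXeII]
    have h3 : ∫ v in a..b, Real.exp (r * v) * g v
        = Real.exp (r * b) * (X b - X a) - ((∫ u in a..b, r * Real.exp (r * u) * X u) - X a * (Real.exp (r * b) - Real.exp (r * a))) := by
      have := hid
      rw [hL, hL2, hR] at this
      linarith
    rw [h3]
    ring_nf
  -- lower bound on the integral
  have hmono : ℓ * (Real.exp (r * b) - Real.exp (r * a)) ≤ ∫ v in a..b, (r * Real.exp (r * v)) * G v := by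
    have : ∫ v in a..b, (r * Real.exp (r * v)) * ℓ ≤ ∫ v in a..b, (r * Real.exp (r * v)) * G v := by
      apply intervalIntegral.integral_mono_on hab
        (((continuous_const.mul (cont_rexp r)).mul continuous_const).intervalIntegrable _ _)
        (by simpa [mul_comm, mul_assoc] using hGII.mul_continuousOn (g := fun v => r * Real.exp (r * v)) (continuous_const.mul (cont_rexp r)).continuousOn)
      intro v hv
      have := hG v hv
      have h0 : (0:ℝ) < r * Real.exp (r * v) := by positivity
      show r * Real.exp (r * v) * ℓ ≤ r * Real.exp (r * v) * G v
      nlinarith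
    calc ℓ * (Real.exp (r * b) - Real.exp (r * a))
        = ∫ v in a..b, (r * Real.exp (r * v)) * ℓ := by
          rw [intervalIntegral.integral_mul_const, integral_r_exp]; ring
      _ ≤ _ := this
  have hkey : ℓ * (Real.exp (r * b) - Real.exp (r * a)) ≤ Real.exp (r * b) * X b - Real.exp (r * a) * X a := by
    rw [← hmain]; exact hmono
  have hepos := Real.exp_pos (r * b)
  have hprod : Real.exp (-(r * (b - a))) * Real.exp (r * b) = Real.exp (r * a) := by
    rw [← Real.exp_add]; ring_nf
  rw [show X a * Real.exp (-(r * (b - a))) + ℓ * (1 - Real.exp (-(r * (b - a))))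
      = (X a * Real.exp (r * a) + ℓ * (Real.exp (r * b) - Real.exp (r * a))) / Real.exp (r * b) by
    rw [eq_div_iff hepos.ne']; linear_combination (X a - ℓ) * hprod]
  rw [div_le_iff₀ hepos]
  nlinarith [hkey]

lemma gronwall_upper (r ℓ a b : ℝ) (hr : 0 < r) (hab : a ≤ b) (X G : ℝ → ℝ)
    (hX : Continuous X) (hGm : Measurable G) (hGi : IntegrableOn G (Ioc a b))
    (hinc : ∀ t ∈ Icc a b, X t = X a + ∫ u in a..t, r * (G u - X u))
    (hG : ∀ u ∈ Icc a b, G u ≤ ℓ) :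
    X b ≤ X a * Real.exp (-(r * (b - a))) + ℓ * (1 - Real.exp (-(r * (b - a)))) := by
  have hneg := gronwall_lower r (-ℓ) a b hr hab (fun t => -X t) (fun t => -G t)
    hX.neg hGm.neg hGi.neg ?_ (fun u hu => neg_le_neg (hG u hu))
  · linarith [show (-X a) * Real.exp (-(r*(b-a))) + (-ℓ)*(1 - Real.exp (-(r*(b-a)))) ≤ -X b from hneg]
  · intro t ht
    show -X t = -X a + _
    have e : ∫ u in a..t, r * (-G u - -X u) = - ∫ u in a..t, r * (G u - X u) := by
      rw [← intervalIntegral.integral_neg]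
      apply intervalIntegral.integral_congr; intro v _; ring
    rw [e, hinc t ht]; ring

end helpers

open intervalIntegral in
set_option maxHeartbeats 2000000 in
theorem distributed_delay_small_delay_constant_r
    (f : ℝ → ℝ) (L K : ℝ) (hL : 0 ≤ L) (hK : 0 < K)
    (h : ℝ → ℝ) (r : ℝ) (hr : 0 < r) (μ : ℝ → Measure ℝ) (φ : ℝ → ℝ)
    (hf_cont : Continuous f)
    (hf_nonneg : ∀ y : ℝ, 0 ≤ y → 0 ≤ f y)
    (hf_lip : ∀ u v : ℝ, 0 ≤ u → 0 ≤ v → |f u - f v| ≤ L * |u - v|)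
    (hf_zero : f 0 = 0)
    (hf_below : ∀ y : ℝ, 0 < y → y < K → y < f y)
    (hf_above : ∀ y : ℝ, K < y → 0 < f y ∧ f y < y)
    (hh_meas : Measurable h)
    (hh_le : ∀ t : ℝ, 0 ≤ t → h t ≤ t)
    (hh_tend : Tendsto h atTop atTop)
    (hμ_prob : ∀ t : ℝ, 0 ≤ t → IsProbabilityMeasure (μ t))
    (hμ_supp : ∀ t : ℝ, 0 ≤ t → μ t (Icc (h t) t)ᶜ = 0)
    (hμ_meas : ∀ g : ℝ → ℝ, Measurable g → (∃ C : ℝ, ∀ y : ℝ, |g y| ≤ C) →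
      Measurable (fun t => ∫ s, g s ∂(μ t)))
    (hφ_cont : ContinuousOn φ (Iic (0 : ℝ)))
    (hφ_bdd : ∃ C : ℝ, ∀ t : ℝ, t ≤ 0 → |φ t| ≤ C)
    (hφ_nonneg : ∀ t : ℝ, t ≤ 0 → 0 ≤ φ t)
    (hφ_pos : 0 < φ 0)
    (hdelay : ∃ c : ℝ, (∀ t : ℝ, 0 ≤ t → t - h t ≤ c) ∧ c < 1 / (r * (L + 1)))
    (x : ℝ → ℝ)
    (hx_cont : Continuous x)
    (hx_init : ∀ t : ℝ, t ≤ 0 → x t = φ t)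
    (hx_sol : ∀ t : ℝ, 0 ≤ t →
      x t = φ 0 + ∫ u in (0:ℝ)..t, r * ((∫ s, f (x s) ∂(μ u)) - x u)) :
    Tendsto x atTop (nhds K) := by
  obtain ⟨c, hc_bd, hc_small⟩ := hdelay
  obtain ⟨C, hC⟩ := hφ_bdd
  have hC0 : 0 ≤ C := le_trans (abs_nonneg _) (hC 0 le_rfl)
  have hc0 : 0 ≤ c := by have h1 := hc_bd 0 le_rfl; have h2 := hh_le 0 le_rfl; linarith
  have hL1 : (0:ℝ) < L + 1 := by linarith
  have hθ : r * c * (L + 1) < 1 := by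
    have h1 : 0 < r * (L + 1) := by positivity
    calc r * c * (L + 1) = c * (r * (L + 1)) := by ring
      _ < (1 / (r * (L + 1))) * (r * (L + 1)) := by exact mul_lt_mul_of_pos_right hc_small h1
      _ = 1 := by field_simp
  set Y : ℝ → ℝ := fun u => ∫ s, f (x s) ∂(μ u) with hYdef
  have hx_sol' : ∀ t : ℝ, 0 ≤ t → x t = φ 0 + ∫ u in (0:ℝ)..t, r * (Y u - x u) := hx_sol
  have hx0 : x 0 = φ 0 := hx_init 0 le_rfl
  -- f K = K
  have hfK : f K = K := by
    have hne1 : (nhdsWithin K (Ioi K)).NeBot := by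
      refine mem_closure_iff_nhdsWithin_neBot.1 ?_
      rw [closure_Ioi]; exact self_mem_Ici
    have hne2 : (nhdsWithin K (Ioo 0 K)).NeBot := by
      refine mem_closure_iff_nhdsWithin_neBot.1 ?_
      rw [closure_Ioo hK.ne]; exact ⟨hK.le, le_rfl⟩
    have ht1 : Tendsto (fun z => f z - z) (nhdsWithin K (Ioi K)) (nhds (f K - K)) :=
      ((hf_cont.sub continuous_id).continuousAt).continuousWithinAt
    have ht2 : Tendsto (fun z => f z - z) (nhdsWithin K (Ioo 0 K)) (nhds (f K - K)) :=
      ((hf_cont.sub continuous_id).continuousAt).continuousWithinAt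
    have h1 : f K - K ≤ 0 := by
      apply le_of_tendsto ht1
      filter_upwards [self_mem_nhdsWithin] with z hz
      have := (hf_above z hz).2; linarith
    have h2 : 0 ≤ f K - K := by
      apply ge_of_tendsto ht2
      filter_upwards [self_mem_nhdsWithin] with z hz
      have := hf_below z hz.1 hz.2; linarith
    linarith
  have hf_ge_on : ∀ z : ℝ, 0 ≤ z → z ≤ K → z ≤ f z := by
    intro z h0 hzK
    rcases eq_or_lt_of_le h0 with h|h
    · rw [← h, hf_zero]
    · rcases eq_or_lt_of_le hzK with h'|h'
      · rw [h', hfK]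
      · exact (hf_below z h h').le
  -- bound for x on Iic T
  have hxbd : ∀ T : ℝ, ∃ B : ℝ, 0 ≤ B ∧ ∀ s : ℝ, s ≤ T → |x s| ≤ B := by
    intro T
    rcases le_total T 0 with hT|hT
    · refine ⟨C, hC0, fun s hs => ?_⟩
      rw [hx_init s (hs.trans hT)]; exact hC s (hs.trans hT)
    · obtain ⟨M, hM⟩ := (isCompact_Icc (a := (0:ℝ)) (b := T)).exists_bound_of_continuousOn
        hx_cont.continuousOn
      refine ⟨max C M, le_trans hC0 (le_max_left _ _), fun s hs => ?_⟩
      rcases le_total s 0 with h'|h'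
      · rw [hx_init s h']; exact le_trans (hC s h') (le_max_left _ _)
      · exact le_trans (by simpa [Real.norm_eq_abs] using hM s ⟨h', hs⟩) (le_max_right _ _)
  -- a.e. support
  have hsupp : ∀ u : ℝ, 0 ≤ u → ∀ᵐ s ∂(μ u), s ∈ Icc (h u) u := by
    intro u hu
    rw [ae_iff]
    have e : {a : ℝ | ¬a ∈ Icc (h u) u} = (Icc (h u) u)ᶜ := rfl
    rw [e]
    exact hμ_supp u hu
  -- integrability of f ∘ x w.r.t. μ u
  have hfx_int : ∀ u : ℝ, 0 ≤ u → Integrable (fun s => f (x s)) (μ u) := by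
    intro u hu
    haveI := hμ_prob u hu
    obtain ⟨B, hB0, hB⟩ := hxbd u
    obtain ⟨Mf, hMf⟩ := (isCompact_Icc (a := -B) (b := B)).exists_bound_of_continuousOn
      hf_cont.continuousOn
    refine ⟨(hf_cont.comp hx_cont).aestronglyMeasurable, ?_⟩
    apply HasFiniteIntegral.of_bounded (C := Mf)
    filter_upwards [hsupp u hu] with s hs
    exact hMf (x s) (abs_le.1 (hB s hs.2))
  -- packaged measurable version of Y
  have hpack : ∀ T : ℝ, 0 ≤ T → ∃ G : ℝ → ℝ, Measurable G ∧
      (∀ u : ℝ, 0 ≤ u → u ≤ T → G u = Y u) ∧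
      ∃ M : ℝ, 0 ≤ M ∧ ∀ u : ℝ, 0 ≤ u → u ≤ T → |G u| ≤ M := by
    intro T hT
    obtain ⟨B, hB0, hB⟩ := hxbd T
    obtain ⟨Mf, hMf⟩ := (isCompact_Icc (a := -B) (b := B)).exists_bound_of_continuousOn
      hf_cont.continuousOn
    have hMf0 : 0 ≤ Mf := le_trans (norm_nonneg _) (hMf (-B) ⟨le_rfl, by linarith⟩)
    set gT : ℝ → ℝ := fun s => f (x (min s T)) with hgT
    have hgTm : Measurable gT :=
      hf_cont.measurable.comp (hx_cont.measurable.comp (measurable_id.min measurable_const))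
    have hgTb : ∀ s, |gT s| ≤ Mf := by
      intro s
      have h1 : |x (min s T)| ≤ B := hB _ (min_le_right _ _)
      simpa [Real.norm_eq_abs] using hMf (x (min s T)) (abs_le.1 h1)
    refine ⟨fun u => ∫ s, gT s ∂(μ u), hμ_meas gT hgTm ⟨Mf, hgTb⟩, ?_, Mf, hMf0, ?_⟩
    · intro u h0u huT
      apply MeasureTheory.integral_congr_ae
      filter_upwards [hsupp u h0u] with s hs
      rw [hgT]
      simp only []
      rw [min_eq_left (hs.2.trans huT)]
    · intro u h0u huT
      haveI := hμ_prob u h0u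
      have := norm_integral_le_of_norm_le_const (μ := μ u) (f := gT) (C := Mf)
        (Filter.Eventually.of_forall (fun s => by simpa [Real.norm_eq_abs] using hgTb s))
      simpa [Real.norm_eq_abs, measure_univ] using this
  -- interval integrability of the RHS integrand
  have hIntOn : ∀ s t : ℝ, 0 ≤ s → s ≤ t →
      IntegrableOn (fun u => r * (Y u - x u)) (Ioc s t) volume := by
    intro s t h0s hst
    obtain ⟨G, hGm, hGeq, M, hM0, hMb⟩ := hpack t (h0s.trans hst)
    obtain ⟨B, hB0, hB⟩ := hxbd t
    have hcand : IntegrableOn (fun u => r * (G u - x u)) (Ioc s t) volume := by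
      apply Integrable.mono' (g := fun _ => r * (M + B))
        (integrableOn_const measure_Ioc_lt_top.ne)
        ((hGm.sub hx_cont.measurable).const_mul r).aestronglyMeasurable
      filter_upwards [ae_restrict_mem measurableSet_Ioc] with u hu
      have h1 : |G u| ≤ M := hMb u (h0s.trans hu.1.le) hu.2
      have h2 : |x u| ≤ B := hB u hu.2
      rw [Real.norm_eq_abs, abs_mul, abs_of_pos hr]
      have : |G u - x u| ≤ M + B := (abs_sub _ _).trans (by gcongr) 
      exact mul_le_mul_of_nonneg_left this hr.le
    apply hcand.congr_fun ?_ measurableSet_Ioc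
    intro u hu
    simp only []
    rw [hGeq u (h0s.trans hu.1.le) hu.2]
  have hII : ∀ s t : ℝ, 0 ≤ s → s ≤ t →
      IntervalIntegrable (fun u => r * (Y u - x u)) volume s t := fun s t h1 h2 =>
    (intervalIntegrable_iff_integrableOn_Ioc_of_le h2).2 (hIntOn s t h1 h2)
  -- increments
  have hinc : ∀ s t : ℝ, 0 ≤ s → s ≤ t → x t = x s + ∫ u in s..t, r * (Y u - x u) := by
    intro s t h1 h2
    have e1 := hx_sol' s h1
    have e2 := hx_sol' t (h1.trans h2)
    have e3 := intervalIntegral.integral_add_adjacent_intervals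
      (hII 0 s le_rfl h1) (hII s t h1 h2)
    linarith
  -- Gronwall wrappers
  have glow : ∀ s t ℓ : ℝ, 0 ≤ s → s ≤ t → (∀ u : ℝ, s ≤ u → u ≤ t → ℓ ≤ Y u) →
      x s * Real.exp (-(r * (t - s))) + ℓ * (1 - Real.exp (-(r * (t - s)))) ≤ x t := by
    intro s t ℓ h1 h2 hYb
    obtain ⟨G, hGm, hGeq, M, hM0, hMb⟩ := hpack t (h1.trans h2)
    have hGi : IntegrableOn G (Ioc s t) volume := by
      apply Integrable.mono' (g := fun _ => M) (integrableOn_const measure_Ioc_lt_top.ne)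
        hGm.aestronglyMeasurable
      filter_upwards [ae_restrict_mem measurableSet_Ioc] with u hu
      rw [Real.norm_eq_abs]; exact hMb u (h1.trans hu.1.le) hu.2
    apply gronwall_lower r ℓ s t hr h2 x G hx_cont hGm hGi
    · intro τ hτ
      rw [hinc s τ h1 hτ.1]
      congr 1
      apply intervalIntegral.integral_congr
      intro u hu
      rw [uIcc_of_le hτ.1] at hu
      show r * (Y u - x u) = r * (G u - x u)
      rw [hGeq u (h1.trans hu.1) (hu.2.trans hτ.2)]
    · intro u hu
      rw [hGeq u (h1.trans hu.1) hu.2]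
      exact hYb u hu.1 hu.2
  have gupp : ∀ s t ℓ : ℝ, 0 ≤ s → s ≤ t → (∀ u : ℝ, s ≤ u → u ≤ t → Y u ≤ ℓ) →
      x t ≤ x s * Real.exp (-(r * (t - s))) + ℓ * (1 - Real.exp (-(r * (t - s)))) := by
    intro s t ℓ h1 h2 hYb
    obtain ⟨G, hGm, hGeq, M, hM0, hMb⟩ := hpack t (h1.trans h2)
    have hGi : IntegrableOn G (Ioc s t) volume := by
      apply Integrable.mono' (g := fun _ => M) (integrableOn_const measure_Ioc_lt_top.ne)
        hGm.aestronglyMeasurable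
      filter_upwards [ae_restrict_mem measurableSet_Ioc] with u hu
      rw [Real.norm_eq_abs]; exact hMb u (h1.trans hu.1.le) hu.2
    apply gronwall_upper r ℓ s t hr h2 x G hx_cont hGm hGi
    · intro τ hτ
      rw [hinc s τ h1 hτ.1]
      congr 1
      apply intervalIntegral.integral_congr
      intro u hu
      rw [uIcc_of_le hτ.1] at hu
      show r * (Y u - x u) = r * (G u - x u)
      rw [hGeq u (h1.trans hu.1) (hu.2.trans hτ.2)]
    · intro u hu
      rw [hGeq u (h1.trans hu.1) hu.2]
      exact hYb u hu.1 hu.2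
  -- pointwise bounds on Y from history bounds
  have hYge : ∀ u q : ℝ, 0 ≤ u → (∀ σ : ℝ, σ ∈ Icc (h u) u → q ≤ f (x σ)) → q ≤ Y u := by
    intro u q hu hq
    haveI := hμ_prob u hu
    have h1 : ∫ _ : ℝ, q ∂(μ u) ≤ ∫ s, f (x s) ∂(μ u) := by
      apply integral_mono_ae (integrable_const q) (hfx_int u hu)
      filter_upwards [hsupp u hu] with s hs using hq s hs
    simpa [measure_univ] using h1
  have hYle : ∀ u q : ℝ, 0 ≤ u → (∀ σ : ℝ, σ ∈ Icc (h u) u → f (x σ) ≤ q) → Y u ≤ q := by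
    intro u q hu hq
    haveI := hμ_prob u hu
    have h1 : ∫ s, f (x s) ∂(μ u) ≤ ∫ _ : ℝ, q ∂(μ u) := by
      apply integral_mono_ae (hfx_int u hu) (integrable_const q)
      filter_upwards [hsupp u hu] with s hs using hq s hs
    simpa [measure_univ] using h1
  have hYabs : ∀ u q : ℝ, 0 ≤ u → (∀ σ : ℝ, σ ∈ Icc (h u) u → |f (x σ) - K| ≤ q) →
      |Y u - K| ≤ q := by
    intro u q hu hq
    haveI := hμ_prob u hu
    have h1 : Y u - K = ∫ s, (f (x s) - K) ∂(μ u) := by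
      rw [integral_sub (hfx_int u hu) (integrable_const K)]
      simp [hYdef, measure_univ]
    rw [h1]
    have h2 := norm_integral_le_of_norm_le_const (μ := μ u) (f := fun s => f (x s) - K) (C := q)
      (by filter_upwards [hsupp u hu] with s hs; rw [Real.norm_eq_abs]; exact hq s hs)
    simpa [Real.norm_eq_abs, measure_univ] using h2
  -- nonnegativity of x for t ≤ 0
  have hxnn0 : ∀ s : ℝ, s ≤ 0 → 0 ≤ x s := by
    intro s hs; rw [hx_init s hs]; exact hφ_nonneg s hs
  -- positivity of x on [0, ∞)
  have hxpos : ∀ t : ℝ, 0 ≤ t → 0 < x t := by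
    by_contra hcon
    push_neg at hcon
    obtain ⟨t₂, ht₂0, ht₂⟩ := hcon
    set S := {t : ℝ | 0 ≤ t ∧ x t ≤ 0} with hS
    have hSne : S.Nonempty := ⟨t₂, ht₂0, ht₂⟩
    have hSclosed : IsClosed S := by
      have : S = Ici (0:ℝ) ∩ {t : ℝ | x t ≤ 0} := rfl
      rw [this]
      exact isClosed_Ici.inter (isClosed_le hx_cont continuous_const)
    have hbddS : BddBelow S := ⟨0, fun t ht => ht.1⟩
    set t₀ := sInf S with ht₀def
    have ht₀S : t₀ ∈ S := hSclosed.csInf_mem hSne hbddS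
    have ht₀pos : 0 < t₀ := by
      rcases eq_or_lt_of_le ht₀S.1 with h'|h'
      · exfalso; have := ht₀S.2; rw [← h', hx0] at this; linarith
      · exact h'
    have hmid : ∀ s : ℝ, 0 ≤ s → s < t₀ → 0 < x s := by
      intro s h0s hst
      by_contra h'
      push_neg at h'
      exact absurd (csInf_le hbddS ⟨h0s, h'⟩) (not_le.2 hst)
    have hnn : ∀ s : ℝ, s ≤ t₀ → 0 ≤ x s := by
      intro s hs
      rcases le_or_gt s 0 with h'|h'
      · exact hxnn0 s h'
      · rcases lt_or_eq_of_le hs with h''|h''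
        · exact (hmid s h'.le h'').le
        · rw [h'']
          have hcl : closure (Ico 0 t₀) ⊆ {s : ℝ | 0 ≤ x s} :=
            closure_minimal (fun w hw => (hmid w hw.1 hw.2).le)
              (isClosed_le continuous_const hx_cont)
          apply hcl
          rw [closure_Ico (ne_of_lt ht₀pos)]
          exact ⟨ht₀pos.le, le_rfl⟩
    have hYnn : ∀ u : ℝ, 0 ≤ u → u ≤ t₀ → (0:ℝ) ≤ Y u := by
      intro u h0u hu
      apply hYge u 0 h0u
      intro σ hσ
      exact hf_nonneg _ (hnn σ (hσ.2.trans hu))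
    have := glow 0 t₀ 0 le_rfl ht₀pos.le (fun u hu1 hu2 => hYnn u hu1 hu2)
    rw [hx0] at this
    have he := Real.exp_pos (-(r * (t₀ - 0)))
    nlinarith [ht₀S.2]
  have hxnn : ∀ s : ℝ, 0 ≤ x s := by
    intro s
    rcases le_or_gt s 0 with h'|h'
    · exact hxnn0 s h'
    · exact (hxpos s h'.le).le
  -- global upper bound
  obtain ⟨zM, hzM, hzMmax⟩ := (isCompact_Icc (a := (0:ℝ)) (b := K + 1)).exists_isMaxOn
    ⟨0, le_rfl, by linarith⟩ hf_cont.continuousOn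
  set Mf := f zM with hMf
  have hMfb : ∀ z : ℝ, 0 ≤ z → z ≤ K + 1 → f z ≤ Mf := fun z h1 h2 => hzMmax ⟨h1, h2⟩
  set B := max (max C (φ 0)) (max (K + 1) Mf) with hB
  have hBC : C ≤ B := le_trans (le_max_left _ _) (le_max_left _ _)
  have hBφ : φ 0 ≤ B := le_trans (le_max_right _ _) (le_max_left _ _)
  have hBK : K + 1 ≤ B := le_trans (le_max_left _ _) (le_max_right _ _)
  have hBMf : Mf ≤ B := le_trans (le_max_right _ _) (le_max_right _ _)
  obtain ⟨zg, hzg, hzgmin⟩ := (isCompact_Icc (a := K + 1) (b := B + 1)).exists_isMinOn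
    ⟨K + 1, le_rfl, by linarith⟩ ((continuous_id.sub hf_cont).continuousOn)
  set γb := zg - f zg with hγb
  have hγbpos : 0 < γb := by
    have h1 : K < zg := by have := hzg.1; linarith
    have := (hf_above zg h1).2
    rw [hγb]; linarith
  have hγbmin : ∀ z : ℝ, K + 1 ≤ z → z ≤ B + 1 → γb ≤ z - f z := fun z h1 h2 =>
    hzgmin ⟨h1, h2⟩
  set γ₁ := min γb 1 with hγ₁
  have hγ₁pos : 0 < γ₁ := lt_min hγbpos one_pos
  have hγ₁le : γ₁ ≤ 1 := min_le_right _ _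
  have hfcap : ∀ z : ℝ, 0 ≤ z → z ≤ B + 1 → f z ≤ B + 1 - γ₁ := by
    intro z h1 h2
    rcases le_or_gt z (K + 1) with h'|h'
    · have := hMfb z h1 h'
      linarith [hBMf, hγ₁le]
    · have := hγbmin z h'.le h2
      have := min_le_left γb 1
      linarith
  have hxB : ∀ t : ℝ, x t ≤ B + 1 := by
    by_contra hcon
    push_neg at hcon
    obtain ⟨t₂, ht₂⟩ := hcon
    have ht₂0 : 0 ≤ t₂ := by
      by_contra h'
      push_neg at h'
      have := hC t₂ h'.le
      rw [← hx_init t₂ h'.le] at this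
      have := (abs_le.1 this).2
      linarith
    set S := {t : ℝ | 0 ≤ t ∧ B + 1 ≤ x t} with hS
    have hSne : S.Nonempty := ⟨t₂, ht₂0, ht₂.le⟩
    have hSclosed : IsClosed S := by
      have : S = Ici (0:ℝ) ∩ {t : ℝ | B + 1 ≤ x t} := rfl
      rw [this]
      exact isClosed_Ici.inter (isClosed_le continuous_const hx_cont)
    have hbddS : BddBelow S := ⟨0, fun t ht => ht.1⟩
    set t₁ := sInf S with ht₁def
    have ht₁S : t₁ ∈ S := hSclosed.csInf_mem hSne hbddS
    have ht₁pos : 0 < t₁ := by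
      rcases eq_or_lt_of_le ht₁S.1 with h'|h'
      · exfalso; have := ht₁S.2; rw [← h', hx0] at this; linarith
      · exact h'
    have hmid : ∀ s : ℝ, 0 ≤ s → s < t₁ → x s < B + 1 := by
      intro s h0s hst
      by_contra h'
      push_neg at h'
      exact absurd (csInf_le hbddS ⟨h0s, h'⟩) (not_le.2 hst)
    have hhist : ∀ s : ℝ, s ≤ t₁ → x s ≤ B + 1 := by
      intro s hs
      rcases le_or_gt s 0 with h'|h'
      · rw [hx_init s h']
        have := (abs_le.1 (hC s h')).2
        linarith
      · rcases lt_or_eq_of_le hs with h''|h''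
        · exact (hmid s h'.le h'').le
        · rw [h'']
          have hcl : closure (Ico 0 t₁) ⊆ {s : ℝ | x s ≤ B + 1} :=
            closure_minimal (fun w hw => (hmid w hw.1 hw.2).le)
              (isClosed_le hx_cont continuous_const)
          apply hcl
          rw [closure_Ico (ne_of_lt ht₁pos)]
          exact ⟨ht₁pos.le, le_rfl⟩
    have hYb : ∀ u : ℝ, 0 ≤ u → u ≤ t₁ → Y u ≤ B + 1 - γ₁ := by
      intro u h0u hu
      apply hYle u _ h0u
      intro σ hσ
      exact hfcap _ (hxnn σ) (hhist σ (hσ.2.trans hu))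
    have := gupp 0 t₁ (B + 1 - γ₁) le_rfl ht₁pos.le (fun u hu1 hu2 => hYb u hu1 hu2)
    rw [hx0] at this
    have he := Real.exp_pos (-(r * (t₁ - 0)))
    have he1 : Real.exp (-(r * (t₁ - 0))) ≤ 1 := Real.exp_le_one_iff.2 (by nlinarith)
    nlinarith [ht₁S.2]
  -- persistence
  obtain ⟨T₀', hT₀'⟩ := (hh_tend.eventually (eventually_ge_atTop (0:ℝ))).exists_forall_of_atTop
  set Tp := max T₀' 0 with hTp
  have hTp0 : (0:ℝ) ≤ Tp := le_max_right _ _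
  have hTph : ∀ u : ℝ, Tp ≤ u → 0 ≤ h u := fun u hu => hT₀' u ((le_max_left _ _).trans hu)
  obtain ⟨zm, hzm, hzmmin⟩ := (isCompact_Icc (a := (0:ℝ)) (b := Tp)).exists_isMinOn
    ⟨0, le_rfl, hTp0⟩ hx_cont.continuousOn
  set m := x zm with hm
  have hmpos : 0 < m := hxpos zm hzm.1
  have hmmin : ∀ s : ℝ, 0 ≤ s → s ≤ Tp → m ≤ x s := fun s h1 h2 => hzmmin ⟨h1, h2⟩
  obtain ⟨zι, hzι, hzιmin⟩ := (isCompact_Icc (a := K) (b := B + 1)).exists_isMinOn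
    ⟨K, le_rfl, by linarith⟩ hf_cont.continuousOn
  set ι := f zι with hι
  have hιpos : 0 < ι := by
    rcases eq_or_lt_of_le hzι.1 with h'|h'
    · rw [hι, ← h', hfK]; exact hK
    · exact (hf_above zι h').1
  have hιmin : ∀ z : ℝ, K ≤ z → z ≤ B + 1 → ι ≤ f z := fun z h1 h2 => hzιmin ⟨h1, h2⟩
  set ℓ₀ := min m ι / 2 with hℓ₀
  have hℓ₀pos : 0 < ℓ₀ := by
    rw [hℓ₀]; positivity
  have hℓ₀m : 2 * ℓ₀ ≤ m := by
    rw [hℓ₀]; rcases le_total m ι with h'|h' <;> simp [min_eq_left, min_eq_right, h'] <;> linarith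
  have hℓ₀ι : 2 * ℓ₀ ≤ ι := by
    rw [hℓ₀]; rcases le_total m ι with h'|h' <;> simp [min_eq_left, min_eq_right, h'] <;> linarith
  have hpers : ∀ t : ℝ, Tp ≤ t → ℓ₀ < x t := by
    by_contra hcon
    push_neg at hcon
    obtain ⟨t₂, ht₂Tp, ht₂⟩ := hcon
    set S := {t : ℝ | Tp ≤ t ∧ x t ≤ ℓ₀} with hS
    have hSne : S.Nonempty := ⟨t₂, ht₂Tp, ht₂⟩
    have hSclosed : IsClosed S := by
      have : S = Ici Tp ∩ {t : ℝ | x t ≤ ℓ₀} := rfl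
      rw [this]
      exact isClosed_Ici.inter (isClosed_le hx_cont continuous_const)
    have hbddS : BddBelow S := ⟨Tp, fun t ht => ht.1⟩
    set t₁ := sInf S with ht₁def
    have ht₁S : t₁ ∈ S := hSclosed.csInf_mem hSne hbddS
    have ht₁pos : Tp < t₁ := by
      rcases eq_or_lt_of_le ht₁S.1 with h'|h'
      · exfalso
        have := ht₁S.2
        have h2 := hmmin Tp hTp0 le_rfl
        rw [← h'] at this
        linarith
      · exact h'
    have hmid : ∀ s : ℝ, Tp ≤ s → s < t₁ → ℓ₀ < x s := by
      intro s h0s hst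
      by_contra h'
      push_neg at h'
      exact absurd (csInf_le hbddS ⟨h0s, h'⟩) (not_le.2 hst)
    have hhist : ∀ s : ℝ, 0 ≤ s → s ≤ t₁ → ℓ₀ ≤ x s := by
      intro s h0s hs
      rcases le_total s Tp with h'|h'
      · linarith [hmmin s h0s h']
      · rcases lt_or_eq_of_le hs with h''|h''
        · exact (hmid s h' h'').le
        · rw [h'']
          have hcl : closure (Ico Tp t₁) ⊆ {s : ℝ | ℓ₀ ≤ x s} :=
            closure_minimal (fun w hw => (hmid w hw.1 hw.2).le)
              (isClosed_le continuous_const hx_cont)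
          apply hcl
          rw [closure_Ico (ne_of_lt ht₁pos)]
          exact ⟨ht₁pos.le, le_rfl⟩
    have hYb : ∀ u : ℝ, Tp ≤ u → u ≤ t₁ → ℓ₀ ≤ Y u := by
      intro u h0u hu
      apply hYge u _ (hTp0.trans h0u)
      intro σ hσ
      have hσ0 : 0 ≤ σ := (hTph u h0u).trans hσ.1
      have hσt : σ ≤ t₁ := hσ.2.trans hu
      have h1 : ℓ₀ ≤ x σ := hhist σ hσ0 hσt
      rcases le_total (x σ) K with h'|h'
      · linarith [hf_ge_on (x σ) (hxnn σ) h']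
      · linarith [hιmin (x σ) h' (hxB σ)]
    have := glow Tp t₁ ℓ₀ hTp0 ht₁pos.le (fun u hu1 hu2 => hYb u hu1 hu2)
    have he := Real.exp_pos (-(r * (t₁ - Tp)))
    have he1 : Real.exp (-(r * (t₁ - Tp))) ≤ 1 := Real.exp_le_one_iff.2 (by nlinarith)
    have hxTp : 2 * ℓ₀ ≤ x Tp := le_trans hℓ₀m (hmmin Tp hTp0 le_rfl)
    nlinarith [ht₁S.2, mul_le_mul_of_nonneg_right hxTp he.le]
  -- limsup / liminf setup
  have hbdd_above : IsBoundedUnder (· ≤ ·) atTop x := isBoundedUnder_of ⟨B + 1, fun t => hxB t⟩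
  have hbdd_below : IsBoundedUnder (· ≥ ·) atTop x := isBoundedUnder_of ⟨0, fun t => hxnn t⟩
  set β := limsup x atTop with hβ
  set α := liminf x atTop with hα
  have hαβ : α ≤ β := liminf_le_limsup hbdd_above hbdd_below
  have hβB : β ≤ B + 1 := limsup_le_of_le hbdd_below.isCoboundedUnder_le
    (Filter.Eventually.of_forall (fun t => hxB t))
  have hαℓ : ℓ₀ ≤ α := le_liminf_of_le hbdd_above.isCoboundedUnder_ge
    ((eventually_ge_atTop Tp).mono (fun t ht => (hpers t ht).le))
  have E1 : ∀ ε : ℝ, 0 < ε → ∀ᶠ t in atTop, x t < β + ε := fun ε hε =>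
    eventually_lt_of_limsup_lt (by linarith) hbdd_above
  have E2 : ∀ ε : ℝ, 0 < ε → ∃ᶠ t in atTop, β - ε < x t := fun ε hε =>
    frequently_lt_of_lt_limsup hbdd_below.isCoboundedUnder_le (by linarith)
  have E3 : ∀ ε : ℝ, 0 < ε → ∀ᶠ t in atTop, α - ε < x t := fun ε hε =>
    eventually_lt_of_lt_liminf (by linarith) hbdd_below
  have E4 : ∀ ε : ℝ, 0 < ε → ∃ᶠ t in atTop, x t < α + ε := fun ε hε =>
    frequently_lt_of_liminf_lt hbdd_above.isCoboundedUnder_ge (by linarith)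
  -- main contradiction
  have hmain : β ≤ K ∧ K ≤ α := by
    by_contra hcon
    set W := max (β - K) (K - α) with hWdef
    have hWpos : 0 < W := by
      rcases not_and_or.1 hcon with h'|h'
      · push_neg at h'
        exact lt_of_lt_of_le (sub_pos.2 h') (le_max_left _ _)
      · push_neg at h'
        exact lt_of_lt_of_le (sub_pos.2 h') (le_max_right _ _)
    have hβKW : β - K ≤ W := le_max_left _ _
    have hαKW : K - α ≤ W := le_max_right _ _
    set θ := r * c * (L + 1) with hθdef
    have hθ0 : 0 ≤ θ := by positivity
    have hθ1 : θ < 1 := hθ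
    set η := (1 - θ) * W / 4 with hηdef
    have hηpos : 0 < η := by
      have h' := mul_pos (by linarith only [hθ1] : (0:ℝ) < 1 - θ) hWpos
      rw [hηdef]; linarith only [h']
    have hηW : η ≤ W := by
      have h' : 0 ≤ θ * W := mul_nonneg hθ0 hWpos.le
      rw [hηdef]; linarith only [h', hWpos]
    set D₁ := (L + 1) * (W + 1) with hD₁def
    have hD₁pos : 0 < D₁ := by
      rw [hD₁def]
      exact mul_pos hL1 (by linarith only [hWpos])
    rcases max_cases (β - K) (K - α) with ⟨hWeq, hWge⟩|⟨hWeq, hWlt⟩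
    · -- Case 1 : W = β - K
      rw [← hWdef] at hWeq
      have hβK : K < β := by linarith only [hWeq, hWpos]
      have hKηB : K + η ≤ B + 1 := by linarith only [hβB, hηW, hWeq]
      obtain ⟨zγ, hzγ, hzγmin⟩ := (isCompact_Icc (a := K + η) (b := B + 1)).exists_isMinOn
        ⟨K + η, le_rfl, hKηB⟩ ((continuous_id.sub hf_cont).continuousOn)
      set γ := zγ - f zγ with hγdef
      have hγpos : 0 < γ := by
        have h1 : K < zγ := lt_of_lt_of_le (by linarith only [hηpos]) hzγ.1
        have h2 := (hf_above zγ h1).2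
        rw [hγdef]; linarith only [h2]
      have hγmin : ∀ z : ℝ, K + η ≤ z → z ≤ B + 1 → γ ≤ z - f z := fun z h1 h2 =>
        hzγmin ⟨h1, h2⟩

      set δ := min 1 (min (η / (r * D₁ + 1)) (γ / (4 * (r * D₁ + 1)))) with hδdef
      have hδpos : 0 < δ := by
        rw [hδdef]
        refine lt_min one_pos (lt_min (by positivity) (by positivity))
      have hδ1 : δ ≤ 1 := min_le_left _ _
      have hrD₁ : (0:ℝ) < r * D₁ + 1 := by positivity
      have hδa : r * δ * D₁ ≤ η := by
        have h1 : δ ≤ η / (r * D₁ + 1) := le_trans (min_le_right _ _) (min_le_left _ _)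
        have h2 : η / (r * D₁ + 1) * (r * D₁ + 1) = η := div_mul_cancel₀ _ hrD₁.ne'
        have hkey := mul_le_mul_of_nonneg_right h1 hrD₁.le
        linarith only [hkey, h2, hδpos.le]
      have hδb : r * δ * D₁ ≤ γ / 4 := by
        have h1 : δ ≤ γ / (4 * (r * D₁ + 1)) := le_trans (min_le_right _ _) (min_le_right _ _)
        have h2 : γ / (4 * (r * D₁ + 1)) * (4 * (r * D₁ + 1)) = γ :=
          div_mul_cancel₀ _ (by positivity)
        have hkey := mul_le_mul_of_nonneg_right h1 (by positivity : (0:ℝ) ≤ 4 * (r * D₁ + 1))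
        linarith only [hkey, h2, hδpos.le]
      set ε := min 1 (min η (min (γ / 12) (γ * r * δ / 8))) with hεdef
      have hεpos : 0 < ε := by
        rw [hεdef]
        refine lt_min one_pos (lt_min hηpos (lt_min (by positivity) (by positivity)))
      have hε1 : ε ≤ 1 := min_le_left _ _
      have hεη : ε ≤ η := le_trans (min_le_right _ _) (min_le_left _ _)
      have hεγ : ε ≤ γ / 12 := le_trans (min_le_right _ _)
        (le_trans (min_le_right _ _) (min_le_left _ _))
      have hεδ : 2 * ε / (r * δ) ≤ γ / 4 := by
        have h1 : ε ≤ γ * r * δ / 8 := le_trans (min_le_right _ _)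
          (le_trans (min_le_right _ _) (min_le_right _ _))
        rw [div_le_iff₀ (by positivity : (0:ℝ) < r * δ)]
        linarith only [h1]
      obtain ⟨T₁', hT₁'⟩ := ((E1 ε hεpos).and (E3 ε hεpos)).exists_forall_of_atTop
      set T₁ := max T₁' Tp with hT₁def
      have hT₁0 : (0:ℝ) ≤ T₁ := le_trans hTp0 (le_max_right _ _)
      have hT₁Tp : Tp ≤ T₁ := le_max_right _ _
      have hT₁x : ∀ t : ℝ, T₁ ≤ t → x t < β + ε ∧ α - ε < x t := fun t ht =>
        hT₁' t ((le_max_left _ _).trans ht)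
      have hxK : ∀ t : ℝ, T₁ ≤ t → |x t - K| ≤ W + ε := by
        intro t ht
        obtain ⟨h1, h2⟩ := hT₁x t ht
        rw [abs_le]
        constructor
        · linarith only [h2, hαKW]
        · linarith only [h1, hβKW]
      obtain ⟨T₂', hT₂'⟩ := (hh_tend.eventually (eventually_ge_atTop T₁)).exists_forall_of_atTop
      set T₂ := max T₂' T₁ with hT₂def
      have hT₂0 : (0:ℝ) ≤ T₂ := le_trans hT₁0 (le_max_right _ _)
      have hT₂1 : T₁ ≤ T₂ := le_max_right _ _
      have hT₂h : ∀ u : ℝ, T₂ ≤ u → T₁ ≤ h u := fun u hu =>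
        hT₂' u ((le_max_left _ _).trans hu)
      set D := (L + 1) * (W + ε) with hDdef
      have hD0 : 0 ≤ D := by
        rw [hDdef]
        exact mul_nonneg hL1.le (by linarith only [hWpos, hεpos])
      have hDD₁ : D ≤ D₁ := by
        rw [hDdef, hD₁def]
        exact mul_le_mul_of_nonneg_left (by linarith only [hε1]) hL1.le
      have hYK : ∀ u : ℝ, T₂ ≤ u → |Y u - K| ≤ L * (W + ε) := by
        intro u hu
        apply hYabs u _ (hT₂0.trans hu)
        intro σ hσ
        have hσ1 : T₁ ≤ σ := (hT₂h u hu).trans hσ.1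
        calc |f (x σ) - K| = |f (x σ) - f K| := by rw [hfK]
          _ ≤ L * |x σ - K| := hf_lip _ _ (hxnn σ) hK.le
          _ ≤ L * (W + ε) := mul_le_mul_of_nonneg_left (hxK σ hσ1) hL
      have hDb : ∀ u : ℝ, T₂ ≤ u → |Y u - x u| ≤ D := by
        intro u hu
        have h1 := hYK u hu
        have h2 := hxK u (hT₂1.trans hu)
        have e : Y u - x u = (Y u - K) - (x u - K) := by ring
        rw [e, hDdef]
        calc |(Y u - K) - (x u - K)| ≤ |Y u - K| + |x u - K| := abs_sub _ _
          _ ≤ L * (W + ε) + (W + ε) := add_le_add h1 h2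
          _ = (L + 1) * (W + ε) := by ring
      have hLip : ∀ s t : ℝ, T₂ ≤ s → s ≤ t → |x t - x s| ≤ r * (t - s) * D := by
        intro s t hs hst
        have e := hinc s t (hT₂0.trans hs) hst
        have e2 : x t - x s = ∫ u in s..t, r * (Y u - x u) := by linarith only [e]
        rw [e2]
        have h3 := intervalIntegral.norm_integral_le_of_norm_le_const
          (C := r * D) (f := fun u => r * (Y u - x u)) (a := s) (b := t) ?_
        · rw [Real.norm_eq_abs] at h3
          calc |∫ u in s..t, r * (Y u - x u)| ≤ r * D * |t - s| := h3
            _ = r * (t - s) * D := by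
                rw [abs_of_nonneg (by linarith only [hst] : (0:ℝ) ≤ t - s)]; ring
        · intro v hv
          rw [uIoc_of_le hst] at hv
          rw [Real.norm_eq_abs, abs_mul, abs_of_pos hr]
          exact mul_le_mul_of_nonneg_left (hDb v (hs.trans hv.1.le)) hr.le
      obtain ⟨T₃', hT₃'⟩ := (hh_tend.eventually (eventually_ge_atTop T₂)).exists_forall_of_atTop
      set T₃ := max T₃' T₂ with hT₃def
      have hT₃2 : T₂ ≤ T₃ := le_max_right _ _
      have hT₃h : ∀ u : ℝ, T₃ ≤ u → T₂ ≤ h u := fun u hu =>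
        hT₃' u ((le_max_left _ _).trans hu)

      obtain ⟨t', ht'β, ht'ge⟩ :=
        ((E2 ε hεpos).and_eventually (eventually_ge_atTop (T₃ + δ))).exists

      set a := t' - δ with hadef
      have haT₃ : T₃ ≤ a := by rw [hadef]; linarith only [ht'ge]
      have haT₂ : T₂ ≤ a := hT₃2.trans haT₃
      have ha0 : 0 ≤ a := hT₂0.trans haT₂
      have hat' : a ≤ t' := by rw [hadef]; linarith only [hδpos]
      have hwin : ∫ u in a..t', r * (Y u - x u) = x t' - x a := by
        have := hinc a t' ha0 hat'
        linarith only [this]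
      have hIIa := hII a t' ha0 hat'
      have hYint : IntervalIntegrable Y volume a t' := by
        have h1 := (hIIa.smul (r⁻¹)).add (hx_cont.intervalIntegrable a t')
        have h2 : Y = (fun u => r⁻¹ • (r * (Y u - x u)) + x u) := by
          funext u
          rw [smul_eq_mul]
          field_simp
          ring
        rw [h2]
        exact h1
      have hYeq : ∫ u in a..t', Y u
          = r⁻¹ * (∫ u in a..t', r * (Y u - x u)) + ∫ u in a..t', x u := by
        rw [← intervalIntegral.integral_const_mul]
        rw [← intervalIntegral.integral_add
          (hIIa.const_mul r⁻¹)
          (hx_cont.intervalIntegrable a t')]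
        apply intervalIntegral.integral_congr
        intro v _
        field_simp
        ring

      have hxlow : ∀ u : ℝ, u ∈ Icc a t' → x t' - r * δ * D ≤ x u := by
        intro u hu
        have h1 := hLip u t' (haT₂.trans hu.1) hu.2
        have h2 : r * (t' - u) * D ≤ r * δ * D := by
          apply mul_le_mul_of_nonneg_right _ hD0
          apply mul_le_mul_of_nonneg_left _ hr.le
          have := hu.1
          rw [hadef] at this
          linarith only [this]
        have h4 := (abs_le.1 h1).2
        linarith only [h2, h4]
      have hFlow : -(2 * ε) ≤ ∫ u in a..t', r * (Y u - x u) := by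
        rw [hwin]
        have h1 : β - ε < x t' := ht'β
        have h2 : x a < β + ε := (hT₁x a (hT₂1.trans haT₂)).1
        linarith only [h1, h2]
      have hxint : δ * (x t' - r * δ * D) ≤ ∫ u in a..t', x u := by
        have h1 : ∫ u in a..t', (x t' - r * δ * D) ≤ ∫ u in a..t', x u := by
          apply intervalIntegral.integral_mono_on hat'
            intervalIntegrable_const (hx_cont.intervalIntegrable a t')
          exact fun u hu => hxlow u hu
        rw [intervalIntegral.integral_const, smul_eq_mul] at h1
        have h2 : t' - a = δ := by rw [hadef]; ring
        rw [h2] at h1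
        exact h1
      have hYlow : δ * (x t' - r * δ * D) - 2 * ε / r ≤ ∫ u in a..t', Y u := by
        rw [hYeq]
        have h1 : r⁻¹ * (-(2*ε)) ≤ r⁻¹ * (∫ u in a..t', r * (Y u - x u)) :=
          mul_le_mul_of_nonneg_left hFlow (by positivity)
        have h2 : r⁻¹ * (-(2*ε)) = -(2 * ε / r) := by field_simp
        linarith only [hxint, h1, h2]
      have hexu : ∃ u ∈ Icc a t', x t' - r * δ * D - 2 * ε / (r * δ) - ε < Y u := by
        by_contra hcon2
        push_neg at hcon2
        have h1 : ∫ u in a..t', Y u ≤ ∫ u in a..t', (x t' - r * δ * D - 2 * ε / (r * δ) - ε) := by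
          apply intervalIntegral.integral_mono_on hat' hYint intervalIntegrable_const
          exact fun u hu => hcon2 u hu
        rw [intervalIntegral.integral_const, smul_eq_mul] at h1
        have h2 : t' - a = δ := by rw [hadef]; ring
        rw [h2] at h1
        have h3 : δ * (2 * ε / (r * δ)) = 2 * ε / r := by
          field_simp
        have h4 : δ * (x t' - r * δ * D - 2 * ε / (r * δ) - ε)
            = δ * (x t' - r * δ * D) - δ * (2 * ε / (r * δ)) - δ * ε := by ring
        have h5 : 0 < δ * ε := mul_pos hδpos hεpos
        linarith only [h1, h3, h4, h5, hYlow]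
      obtain ⟨u, huI, hYu⟩ := hexu
      have huT₂ : T₂ ≤ u := haT₂.trans huI.1
      have huT₃ : T₃ ≤ u := haT₃.trans huI.1
      have hu0 : 0 ≤ u := hT₂0.trans huT₂
      have h6 : r * δ * D ≤ η := le_trans
        (mul_le_mul_of_nonneg_left hDD₁ (by positivity)) hδa
      have h6' : r * δ * D ≤ γ / 4 := le_trans
        (mul_le_mul_of_nonneg_left hDD₁ (by positivity)) hδb
      have h8 : (1 - θ) * W = 4 * η := by rw [hηdef]; ring
      have hist : ∀ σ : ℝ, σ ∈ Icc (h u) u → K + η ≤ x σ := by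
        intro σ hσ
        have hσT₂ : T₂ ≤ σ := (hT₃h u huT₃).trans hσ.1
        have h1 := hLip σ u hσT₂ hσ.2
        have hc1 : u - σ ≤ c := by
          have h2 := hc_bd u hu0
          linarith only [h2, hσ.1]
        have h2 : r * (u - σ) * D ≤ r * c * D := by
          apply mul_le_mul_of_nonneg_right _ hD0
          exact mul_le_mul_of_nonneg_left hc1 hr.le
        have h3 : r * c * D ≤ θ * W + ε := by
          have e1 : r * c * D = θ * (W + ε) := by rw [hDdef, hθdef]; ring
          have h' := mul_le_mul_of_nonneg_right hθ1.le hεpos.le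
          linarith only [e1, h']
        have h4 := hxlow u huI
        have h5 := (abs_le.1 h1).2
        have h7 : β - ε < x t' := ht'β
        linarith only [h2, h3, h4, h5, h6, h7, h8, hεη, hWeq]
      have hYup : Y u ≤ β + ε - γ := by
        apply hYle u _ hu0
        intro σ hσ
        have h1 := hist σ hσ
        have hσT₁ : T₁ ≤ σ := hT₂1.trans ((hT₃h u huT₃).trans hσ.1)
        have h2 : x σ < β + ε := (hT₁x σ hσT₁).1
        have h3 := hγmin (x σ) h1 (hxB σ)
        linarith only [h2, h3]
      have h7 : β - ε < x t' := ht'β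
      clear_value ε δ γ D
      linarith only [hYu, hYup, h6', h7, hεδ, hεγ, hγpos]
    · -- Case 2 : W = K - α
      rw [← hWdef] at hWeq
      have hαltK : α < K := by linarith only [hWeq, hWpos]
      have h8 : (1 - θ) * W = 4 * η := by rw [hηdef]; ring
      have hθW : 0 ≤ θ * W := mul_nonneg hθ0 hWpos.le
      have hℓ2K : ℓ₀ / 2 ≤ K - η := by
        linarith only [hWeq, hαℓ, hℓ₀pos, hWpos, h8, hθW]
      obtain ⟨zγ, hzγ, hzγmin⟩ := (isCompact_Icc (a := ℓ₀ / 2) (b := K - η)).exists_isMinOn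
        ⟨ℓ₀ / 2, le_rfl, hℓ2K⟩ ((hf_cont.sub continuous_id).continuousOn)
      set γ := f zγ - zγ with hγdef
      have hγpos : 0 < γ := by
        have h1 : 0 < zγ := lt_of_lt_of_le (by linarith only [hℓ₀pos]) hzγ.1
        have h2 : zγ < K := lt_of_le_of_lt hzγ.2 (by linarith only [hηpos])
        have h3 := hf_below zγ h1 h2
        rw [hγdef]; linarith only [h3]
      have hγmin : ∀ z : ℝ, ℓ₀ / 2 ≤ z → z ≤ K - η → γ ≤ f z - z := fun z h1 h2 =>
        hzγmin ⟨h1, h2⟩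

      set δ := min 1 (min (η / (r * D₁ + 1)) (γ / (4 * (r * D₁ + 1)))) with hδdef
      have hδpos : 0 < δ := by
        rw [hδdef]
        refine lt_min one_pos (lt_min (by positivity) (by positivity))
      have hδ1 : δ ≤ 1 := min_le_left _ _
      have hrD₁ : (0:ℝ) < r * D₁ + 1 := by positivity
      have hδa : r * δ * D₁ ≤ η := by
        have h1 : δ ≤ η / (r * D₁ + 1) := le_trans (min_le_right _ _) (min_le_left _ _)
        have h2 : η / (r * D₁ + 1) * (r * D₁ + 1) = η := div_mul_cancel₀ _ hrD₁.ne'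
        have hkey := mul_le_mul_of_nonneg_right h1 hrD₁.le
        linarith only [hkey, h2, hδpos.le]
      have hδb : r * δ * D₁ ≤ γ / 4 := by
        have h1 : δ ≤ γ / (4 * (r * D₁ + 1)) := le_trans (min_le_right _ _) (min_le_right _ _)
        have h2 : γ / (4 * (r * D₁ + 1)) * (4 * (r * D₁ + 1)) = γ :=
          div_mul_cancel₀ _ (by positivity)
        have hkey := mul_le_mul_of_nonneg_right h1 (by positivity : (0:ℝ) ≤ 4 * (r * D₁ + 1))
        linarith only [hkey, h2, hδpos.le]
      set ε := min 1 (min η (min (γ / 12) (γ * r * δ / 8))) with hεdef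
      have hεpos : 0 < ε := by
        rw [hεdef]
        refine lt_min one_pos (lt_min hηpos (lt_min (by positivity) (by positivity)))
      have hε1 : ε ≤ 1 := min_le_left _ _
      have hεη : ε ≤ η := le_trans (min_le_right _ _) (min_le_left _ _)
      have hεγ : ε ≤ γ / 12 := le_trans (min_le_right _ _)
        (le_trans (min_le_right _ _) (min_le_left _ _))
      have hεδ : 2 * ε / (r * δ) ≤ γ / 4 := by
        have h1 : ε ≤ γ * r * δ / 8 := le_trans (min_le_right _ _)
          (le_trans (min_le_right _ _) (min_le_right _ _))
        rw [div_le_iff₀ (by positivity : (0:ℝ) < r * δ)]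
        linarith only [h1]
      obtain ⟨T₁', hT₁'⟩ := ((E1 ε hεpos).and (E3 ε hεpos)).exists_forall_of_atTop
      set T₁ := max T₁' Tp with hT₁def
      have hT₁0 : (0:ℝ) ≤ T₁ := le_trans hTp0 (le_max_right _ _)
      have hT₁Tp : Tp ≤ T₁ := le_max_right _ _
      have hT₁x : ∀ t : ℝ, T₁ ≤ t → x t < β + ε ∧ α - ε < x t := fun t ht =>
        hT₁' t ((le_max_left _ _).trans ht)
      have hxK : ∀ t : ℝ, T₁ ≤ t → |x t - K| ≤ W + ε := by
        intro t ht
        obtain ⟨h1, h2⟩ := hT₁x t ht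
        rw [abs_le]
        constructor
        · linarith only [h2, hαKW]
        · linarith only [h1, hβKW]
      obtain ⟨T₂', hT₂'⟩ := (hh_tend.eventually (eventually_ge_atTop T₁)).exists_forall_of_atTop
      set T₂ := max T₂' T₁ with hT₂def
      have hT₂0 : (0:ℝ) ≤ T₂ := le_trans hT₁0 (le_max_right _ _)
      have hT₂1 : T₁ ≤ T₂ := le_max_right _ _
      have hT₂h : ∀ u : ℝ, T₂ ≤ u → T₁ ≤ h u := fun u hu =>
        hT₂' u ((le_max_left _ _).trans hu)
      set D := (L + 1) * (W + ε) with hDdef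
      have hD0 : 0 ≤ D := by
        rw [hDdef]
        exact mul_nonneg hL1.le (by linarith only [hWpos, hεpos])
      have hDD₁ : D ≤ D₁ := by
        rw [hDdef, hD₁def]
        exact mul_le_mul_of_nonneg_left (by linarith only [hε1]) hL1.le
      have hYK : ∀ u : ℝ, T₂ ≤ u → |Y u - K| ≤ L * (W + ε) := by
        intro u hu
        apply hYabs u _ (hT₂0.trans hu)
        intro σ hσ
        have hσ1 : T₁ ≤ σ := (hT₂h u hu).trans hσ.1
        calc |f (x σ) - K| = |f (x σ) - f K| := by rw [hfK]
          _ ≤ L * |x σ - K| := hf_lip _ _ (hxnn σ) hK.le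
          _ ≤ L * (W + ε) := mul_le_mul_of_nonneg_left (hxK σ hσ1) hL
      have hDb : ∀ u : ℝ, T₂ ≤ u → |Y u - x u| ≤ D := by
        intro u hu
        have h1 := hYK u hu
        have h2 := hxK u (hT₂1.trans hu)
        have e : Y u - x u = (Y u - K) - (x u - K) := by ring
        rw [e, hDdef]
        calc |(Y u - K) - (x u - K)| ≤ |Y u - K| + |x u - K| := abs_sub _ _
          _ ≤ L * (W + ε) + (W + ε) := add_le_add h1 h2
          _ = (L + 1) * (W + ε) := by ring
      have hLip : ∀ s t : ℝ, T₂ ≤ s → s ≤ t → |x t - x s| ≤ r * (t - s) * D := by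
        intro s t hs hst
        have e := hinc s t (hT₂0.trans hs) hst
        have e2 : x t - x s = ∫ u in s..t, r * (Y u - x u) := by linarith only [e]
        rw [e2]
        have h3 := intervalIntegral.norm_integral_le_of_norm_le_const
          (C := r * D) (f := fun u => r * (Y u - x u)) (a := s) (b := t) ?_
        · rw [Real.norm_eq_abs] at h3
          calc |∫ u in s..t, r * (Y u - x u)| ≤ r * D * |t - s| := h3
            _ = r * (t - s) * D := by
                rw [abs_of_nonneg (by linarith only [hst] : (0:ℝ) ≤ t - s)]; ring
        · intro v hv
          rw [uIoc_of_le hst] at hv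
          rw [Real.norm_eq_abs, abs_mul, abs_of_pos hr]
          exact mul_le_mul_of_nonneg_left (hDb v (hs.trans hv.1.le)) hr.le
      obtain ⟨T₃', hT₃'⟩ := (hh_tend.eventually (eventually_ge_atTop T₂)).exists_forall_of_atTop
      set T₃ := max T₃' T₂ with hT₃def
      have hT₃2 : T₂ ≤ T₃ := le_max_right _ _
      have hT₃h : ∀ u : ℝ, T₃ ≤ u → T₂ ≤ h u := fun u hu =>
        hT₃' u ((le_max_left _ _).trans hu)

      obtain ⟨t', ht'α, ht'ge⟩ :=
        ((E4 ε hεpos).and_eventually (eventually_ge_atTop (T₃ + δ))).exists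

      set a := t' - δ with hadef
      have haT₃ : T₃ ≤ a := by rw [hadef]; linarith only [ht'ge]
      have haT₂ : T₂ ≤ a := hT₃2.trans haT₃
      have ha0 : 0 ≤ a := hT₂0.trans haT₂
      have hat' : a ≤ t' := by rw [hadef]; linarith only [hδpos]
      have hwin : ∫ u in a..t', r * (Y u - x u) = x t' - x a := by
        have := hinc a t' ha0 hat'
        linarith only [this]
      have hIIa := hII a t' ha0 hat'
      have hYint : IntervalIntegrable Y volume a t' := by
        have h1 := (hIIa.smul (r⁻¹)).add (hx_cont.intervalIntegrable a t')
        have h2 : Y = (fun u => r⁻¹ • (r * (Y u - x u)) + x u) := by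
          funext u
          rw [smul_eq_mul]
          field_simp
          ring
        rw [h2]
        exact h1
      have hYeq : ∫ u in a..t', Y u
          = r⁻¹ * (∫ u in a..t', r * (Y u - x u)) + ∫ u in a..t', x u := by
        rw [← intervalIntegral.integral_const_mul]
        rw [← intervalIntegral.integral_add
          (hIIa.const_mul r⁻¹)
          (hx_cont.intervalIntegrable a t')]
        apply intervalIntegral.integral_congr
        intro v _
        field_simp
        ring

      have hxhigh : ∀ u : ℝ, u ∈ Icc a t' → x u ≤ x t' + r * δ * D := by
        intro u hu
        have h1 := hLip u t' (haT₂.trans hu.1) hu.2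
        have h2 : r * (t' - u) * D ≤ r * δ * D := by
          apply mul_le_mul_of_nonneg_right _ hD0
          apply mul_le_mul_of_nonneg_left _ hr.le
          have := hu.1
          rw [hadef] at this
          linarith only [this]
        have h4 := (abs_le.1 h1).1
        linarith only [h2, h4]
      have hFup : ∫ u in a..t', r * (Y u - x u) ≤ 2 * ε := by
        rw [hwin]
        have h1 : x t' < α + ε := ht'α
        have h2 : α - ε < x a := (hT₁x a (hT₂1.trans haT₂)).2
        linarith only [h1, h2]
      have hxint : ∫ u in a..t', x u ≤ δ * (x t' + r * δ * D) := by
        have h1 : ∫ u in a..t', x u ≤ ∫ u in a..t', (x t' + r * δ * D) := by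
          apply intervalIntegral.integral_mono_on hat'
            (hx_cont.intervalIntegrable a t') intervalIntegrable_const
          exact fun u hu => hxhigh u hu
        rw [intervalIntegral.integral_const, smul_eq_mul] at h1
        have h2 : t' - a = δ := by rw [hadef]; ring
        rw [h2] at h1
        exact h1
      have hYhigh : ∫ u in a..t', Y u ≤ δ * (x t' + r * δ * D) + 2 * ε / r := by
        rw [hYeq]
        have h1 : r⁻¹ * (∫ u in a..t', r * (Y u - x u)) ≤ r⁻¹ * (2 * ε) :=
          mul_le_mul_of_nonneg_left hFup (by positivity)
        have h2 : r⁻¹ * (2 * ε) = 2 * ε / r := by field_simp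
        linarith only [hxint, h1, h2]
      have hexu : ∃ u ∈ Icc a t', Y u < x t' + r * δ * D + 2 * ε / (r * δ) + ε := by
        by_contra hcon2
        push_neg at hcon2
        have h1 : ∫ u in a..t', (x t' + r * δ * D + 2 * ε / (r * δ) + ε) ≤ ∫ u in a..t', Y u := by
          apply intervalIntegral.integral_mono_on hat' intervalIntegrable_const hYint
          exact fun u hu => hcon2 u hu
        rw [intervalIntegral.integral_const, smul_eq_mul] at h1
        have h2 : t' - a = δ := by rw [hadef]; ring
        rw [h2] at h1
        have h3 : δ * (2 * ε / (r * δ)) = 2 * ε / r := by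
          field_simp
        have h4 : δ * (x t' + r * δ * D + 2 * ε / (r * δ) + ε)
            = δ * (x t' + r * δ * D) + δ * (2 * ε / (r * δ)) + δ * ε := by ring
        have h5 : 0 < δ * ε := mul_pos hδpos hεpos
        linarith only [h1, h3, h4, h5, hYhigh]
      obtain ⟨u, huI, hYu⟩ := hexu
      have huT₂ : T₂ ≤ u := haT₂.trans huI.1
      have huT₃ : T₃ ≤ u := haT₃.trans huI.1
      have hu0 : 0 ≤ u := hT₂0.trans huT₂
      have h6 : r * δ * D ≤ η := le_trans
        (mul_le_mul_of_nonneg_left hDD₁ (by positivity)) hδa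
      have h6' : r * δ * D ≤ γ / 4 := le_trans
        (mul_le_mul_of_nonneg_left hDD₁ (by positivity)) hδb
      have hist : ∀ σ : ℝ, σ ∈ Icc (h u) u → ℓ₀ ≤ x σ ∧ x σ ≤ K - η := by
        intro σ hσ
        have hσT₂ : T₂ ≤ σ := (hT₃h u huT₃).trans hσ.1
        have hσT₁ : T₁ ≤ σ := hT₂1.trans hσT₂
        have hσTp : Tp ≤ σ := hT₁Tp.trans hσT₁
        constructor
        · exact (hpers σ hσTp).le
        · have h1 := hLip σ u hσT₂ hσ.2
          have hc1 : u - σ ≤ c := by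
            have h2 := hc_bd u hu0
            linarith only [h2, hσ.1]
          have h2 : r * (u - σ) * D ≤ r * c * D := by
            apply mul_le_mul_of_nonneg_right _ hD0
            exact mul_le_mul_of_nonneg_left hc1 hr.le
          have h3 : r * c * D ≤ θ * W + ε := by
            have e1 : r * c * D = θ * (W + ε) := by rw [hDdef, hθdef]; ring
            have h' := mul_le_mul_of_nonneg_right hθ1.le hεpos.le
            linarith only [e1, h']
          have h4 := hxhigh u huI
          have h5 := (abs_le.1 h1).1
          have h7 : x t' < α + ε := ht'α
          linarith only [h2, h3, h4, h5, h6, h7, h8, hεη, hWeq]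
      have hYlow2 : α - ε + γ ≤ Y u := by
        apply hYge u _ hu0
        intro σ hσ
        obtain ⟨h1, h2⟩ := hist σ hσ
        have hσT₁ : T₁ ≤ σ := hT₂1.trans ((hT₃h u huT₃).trans hσ.1)
        have h3 : α - ε < x σ := (hT₁x σ hσT₁).2
        have h4 := hγmin (x σ) (by linarith only [h1, hℓ₀pos]) h2
        linarith only [h3, h4]
      have h7 : x t' < α + ε := ht'α
      clear_value ε δ γ D
      linarith only [hYu, hYlow2, h6', h7, hεδ, hεγ, hγpos]
  have hαK : α = K := le_antisymm (le_trans hαβ hmain.1) hmain.2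
  have hβKfin : β = K := le_antisymm hmain.1 (le_trans hmain.2 hαβ)
  exact tendsto_of_liminf_eq_limsup hαK hβKfin hbdd_above hbdd_below
end
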